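/- arXiv:1902.09218 — 9 statements merged into one kernel-verified Lean document; each statement's English description precedes it below -/
import Mathlib

section
/- Let G = {g₁,…,gₙ} be a ℤ-basis of ℤⁿ and suppose G₁ = {g₁,…,gₙ₋₁,w₁} and G₂ = {g₁,…,gₙ₋₁,w₂} are two ℤ-bases of ℤⁿ with w₁ ≠ gₙ ≠ w₂. Assume the 'Uniqueness Condition' holds for these bases: whenever ∑_{i∈I} rᵢ vᵢ = ∑_{j∈I'} r'ⱼ wⱼ with all rᵢ, r'ⱼ > 0, where the vᵢ are distinct elements of one basis and the wⱼ are distinct elements of another of the three bases, there is a bijection σ: I' → I with r'ⱼ = r_{σ(j)} and wⱼ = v_{σ(j)}. Then G₁ = G₂, i.e., w₁ = w₂. (Uniqueness of mutation in a G-system.) -/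
open Finset

private lemma sum_pos_eq {N : ℕ} {M : Type*} [AddCommGroup M]
    (c : Fin N → ℤ) (x : Fin N → M) :
    ∑ i ∈ univ.filter (fun i => 0 < c i), c i • x i
      = (∑ i, c i • x i) + ∑ i ∈ univ.filter (fun i => c i < 0), (-c i) • x i := by
  have h1 : (∑ i, c i • x i)
      = ∑ i ∈ univ.filter (fun i => 0 < c i), c i • x i
        + ∑ i ∈ univ.filter (fun i => ¬ 0 < c i), c i • x i :=
    (Finset.sum_filter_add_sum_filter_not univ _ _).symm
  have h2 : ∑ i ∈ univ.filter (fun i => ¬ 0 < c i), c i • x i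
      = ∑ i ∈ univ.filter (fun i => c i < 0), c i • x i := by
    refine (Finset.sum_subset ?_ ?_).symm
    · intro i hi
      simp only [mem_filter, mem_univ, true_and] at hi ⊢
      omega
    · intro i hi hni
      simp only [mem_filter, mem_univ, true_and] at hi hni
      have : c i = 0 := by omega
      simp [this]
  have h3 : ∑ i ∈ univ.filter (fun i => c i < 0), (-c i) • x i
      = -∑ i ∈ univ.filter (fun i => c i < 0), c i • x i := by
    simp [neg_smul]
  rw [h1, h2, h3]
  abel

/-- Uniqueness of mutation in a `G`-system (part of Proposition-Definition
5.1.3): let `G = {g₁,…,gₙ}` be a ℤ-basis of ℤⁿ and let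
`G₁ = {g₁,…,g_{n-1}, w₁}`, `G₂ = {g₁,…,g_{n-1}, w₂}` also be ℤ-bases of ℤⁿ with
`w₁ ≠ gₙ ≠ w₂`. If the Uniqueness Condition holds for all pairs among these
three bases, then `G₁ = G₂`, i.e. `w₁ = w₂`. -/
theorem stmt0 (n : ℕ) (g : Fin (n + 1) → (Fin (n + 1) → ℤ))
    (w₁ w₂ : Fin (n + 1) → ℤ)
    (hw₁ : w₁ ≠ g (Fin.last n)) (hw₂ : w₂ ≠ g (Fin.last n))
    (g₁ g₂ : Fin (n + 1) → (Fin (n + 1) → ℤ))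
    (hg₁ : g₁ = Function.update g (Fin.last n) w₁)
    (hg₂ : g₂ = Function.update g (Fin.last n) w₂)
    (hb : ∀ b ∈ ({g, g₁, g₂} : Set (Fin (n + 1) → Fin (n + 1) → ℤ)),
      LinearIndependent ℤ b ∧ Submodule.span ℤ (Set.range b) = ⊤)
    (huniq : ∀ u ∈ ({g, g₁, g₂} : Set (Fin (n + 1) → Fin (n + 1) → ℤ)),
      ∀ v ∈ ({g, g₁, g₂} : Set (Fin (n + 1) → Fin (n + 1) → ℤ)),
      ∀ (I I' : Finset (Fin (n + 1))) (r r' : Fin (n + 1) → ℤ),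
        (∀ i ∈ I, 0 < r i) → (∀ j ∈ I', 0 < r' j) →
        (∑ i ∈ I, r i • u i) = (∑ j ∈ I', r' j • v j) →
        ∃ σ : Fin (n + 1) → Fin (n + 1), Set.BijOn σ ↑I' ↑I ∧
          ∀ j ∈ I', r' j = r (σ j) ∧ v j = u (σ j)) :
    w₁ = w₂ := by
  have hgmem : g ∈ ({g, g₁, g₂} : Set (Fin (n + 1) → Fin (n + 1) → ℤ)) := by simp
  have hg1mem : g₁ ∈ ({g, g₁, g₂} : Set (Fin (n + 1) → Fin (n + 1) → ℤ)) := by simp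
  have hg2mem : g₂ ∈ ({g, g₁, g₂} : Set (Fin (n + 1) → Fin (n + 1) → ℤ)) := by simp
  have hgind := (hb g hgmem).1
  -- key claim, applied to (g₁, w₁) and (g₂, w₂)
  have key : ∀ (gb : Fin (n + 1) → Fin (n + 1) → ℤ) (w : Fin (n + 1) → ℤ),
      gb ∈ ({g, g₁, g₂} : Set (Fin (n + 1) → Fin (n + 1) → ℤ)) →
      gb = Function.update g (Fin.last n) w → w ≠ g (Fin.last n) →
      ∃ r : Fin (n + 1) → ℤ, r (Fin.last n) < 0 ∧
        g (Fin.last n) = ∑ i, r i • gb i := by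
    intro gb w hmem hupd hwne
    have hind := (hb gb hmem).1
    have hinj : Function.Injective gb := hind.injective
    let B : Module.Basis (Fin (n + 1)) ℤ (Fin (n + 1) → ℤ) :=
      Module.Basis.mk hind (hb gb hmem).2.ge
    set r : Fin (n + 1) → ℤ := fun i => B.repr (g (Fin.last n)) i with hr
    have hsum : g (Fin.last n) = ∑ i, r i • gb i := by
      conv_lhs => rw [← B.sum_repr (g (Fin.last n))]
      simp [B, hr]
    refine ⟨r, ?_, hsum⟩
    have hne : r (Fin.last n) ≠ 0 := by
      intro h0
      -- then g (last) is a combination of g i, i ≠ last : contradicts lin indep of g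
      have hc : ∑ i, (fun i => if i = Fin.last n then 1 else -r i) i • g i = 0 := by
        have hsplit := Finset.add_sum_erase univ
          (fun i => (if i = Fin.last n then 1 else -r i) • g i) (mem_univ (Fin.last n))
        have hsplit2 := Finset.add_sum_erase univ
          (fun i => r i • gb i) (mem_univ (Fin.last n))
        have hgb : ∀ i ∈ univ.erase (Fin.last n), r i • gb i = r i • g i := by
          intro i hi
          have : i ≠ Fin.last n := (Finset.mem_erase.mp hi).1
          rw [hupd, Function.update_of_ne this]
        rw [← hsplit]
        have : ∑ i ∈ univ.erase (Fin.last n),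
            (if i = Fin.last n then (1:ℤ) else -r i) • g i
            = -∑ i ∈ univ.erase (Fin.last n), r i • g i := by
          rw [← Finset.sum_neg_distrib]
          refine Finset.sum_congr rfl ?_
          intro i hi
          have : i ≠ Fin.last n := (Finset.mem_erase.mp hi).1
          simp [this, neg_smul]
        rw [this]
        have hsum' : g (Fin.last n)
            = r (Fin.last n) • gb (Fin.last n)
              + ∑ i ∈ univ.erase (Fin.last n), r i • g i := by
          rw [hsum, ← hsplit2]
          congr 1
          exact Finset.sum_congr rfl hgb
        rw [h0, zero_smul, zero_add] at hsum'
        simp only [if_pos rfl, one_smul]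
        rw [hsum']
        simp
      have := Fintype.linearIndependent_iff.mp hgind _ hc (Fin.last n)
      simp at this
    by_contra hnlt
    have hpos : 0 < r (Fin.last n) := by omega
    -- apply uniqueness: g(last) + ∑_{r i < 0} (-r i) • g i = ∑_{0 < r i} r i • gb i
    have hlast_notmem : Fin.last n ∉ univ.filter (fun i => r i < 0) := by
      simp [hnlt]
    have heq : ∑ i ∈ insert (Fin.last n) (univ.filter (fun i => r i < 0)),
        (fun i => if i = Fin.last n then 1 else -r i) i • g i
        = ∑ j ∈ univ.filter (fun i => 0 < r i), r j • gb j := by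
      have htail : ∑ i ∈ univ.filter (fun i => r i < 0),
          (fun i => if i = Fin.last n then (1:ℤ) else -r i) i • g i
          = ∑ i ∈ univ.filter (fun i => r i < 0), (-r i) • gb i := by
        refine Finset.sum_congr rfl ?_
        intro i hi
        have hine : i ≠ Fin.last n := by
          intro h; rw [h] at hi; exact hlast_notmem hi
        simp only [hupd, Function.update_of_ne hine, if_neg hine]
      rw [sum_pos_eq r gb, ← hsum, Finset.sum_insert hlast_notmem, htail]
      simp
    obtain ⟨σ, hσ, hσ'⟩ := huniq g hgmem gb hmem _ _ _ _
      (by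
        intro i hi
        rcases Finset.mem_insert.mp hi with h | h
        · simp [h]
        · have : i ≠ Fin.last n := by
            intro he; rw [he] at h; exact hlast_notmem h
          simp only [if_neg this]
          simp only [mem_filter] at h
          omega)
      (by intro j hj; simp only [mem_filter] at hj; exact hj.2)
      heq
    have hlastI' : Fin.last n ∈ univ.filter (fun i => 0 < r i) := by
      simp [hpos]
    obtain ⟨_, hgb_eq⟩ := hσ' (Fin.last n) hlastI'
    have hwval : gb (Fin.last n) = w := by rw [hupd]; simp
    have hσmem := hσ.mapsTo hlastI'
    simp only [Finset.coe_insert, Set.mem_insert_iff, Finset.coe_filter] at hσmem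
    rcases hσmem with h | h
    · exact hwne (by rw [← hwval, hgb_eq, h])
    · have hne' : σ (Fin.last n) ≠ Fin.last n := by
        intro he; rw [he] at h; simp only [Set.mem_setOf_eq] at h; omega
      have : gb (σ (Fin.last n)) = gb (Fin.last n) := by
        rw [hupd, Function.update_of_ne hne', Function.update_self, ← hwval, hgb_eq]
      exact hne' (hinj this)
  obtain ⟨r, hrneg, hrsum⟩ := key g₁ w₁ hg1mem hg₁ hw₁
  obtain ⟨s, hsneg, hssum⟩ := key g₂ w₂ hg2mem hg₂ hw₂
  -- final step
  set e : Fin (n + 1) → ℤ := fun i => if i = Fin.last n then 0 else s i - r i with he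
  have hg2inj : Function.Injective g₂ := (hb g₂ hg2mem).1.injective
  have hw1val : g₁ (Fin.last n) = w₁ := by rw [hg₁]; simp
  have hw2val : g₂ (Fin.last n) = w₂ := by rw [hg₂]; simp
  -- main equation: (-r last) • w₁ + ∑_{e>0} e i • g₁ i = (-s last) • w₂ + ∑_{e<0} (-e i) • g₂ i
  have hmain : ∑ i ∈ insert (Fin.last n) (univ.filter (fun i => 0 < e i)),
      (fun i => if i = Fin.last n then -r (Fin.last n) else e i) i • g₁ i
      = ∑ j ∈ insert (Fin.last n) (univ.filter (fun i => e i < 0)),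
      (fun j => if j = Fin.last n then -s (Fin.last n) else -e j) j • g₂ j := by
    have hlnp : Fin.last n ∉ univ.filter (fun i => 0 < e i) := by simp [he]
    have hlnn : Fin.last n ∉ univ.filter (fun i => e i < 0) := by simp [he]
    rw [Finset.sum_insert hlnp, Finset.sum_insert hlnn]
    have hA : ∑ i ∈ univ.filter (fun i => 0 < e i),
        (fun i => if i = Fin.last n then -r (Fin.last n) else e i) i • g₁ i
        = ∑ i ∈ univ.filter (fun i => 0 < e i), e i • g i := by
      refine Finset.sum_congr rfl ?_
      intro i hi
      have hine : i ≠ Fin.last n := by intro h; rw [h] at hi; exact hlnp hi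
      simp only [hg₁, Function.update_of_ne hine, if_neg hine]
    have hB : ∑ j ∈ univ.filter (fun i => e i < 0),
        (fun j => if j = Fin.last n then -s (Fin.last n) else -e j) j • g₂ j
        = ∑ j ∈ univ.filter (fun i => e i < 0), (-e j) • g j := by
      refine Finset.sum_congr rfl ?_
      intro i hi
      have hine : i ≠ Fin.last n := by intro h; rw [h] at hi; exact hlnn hi
      simp only [hg₂, Function.update_of_ne hine, if_neg hine]
    -- now need: (-r last) • w₁ + (∑ i, e i • g i + ∑_{neg} (-e)•g) = (-s last) • w₂ + ∑_{neg} (-e)•g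
    have hcore : (-r (Fin.last n)) • w₁ + ∑ i, e i • g i = (-s (Fin.last n)) • w₂ := by
      -- from hrsum = hssum
      have h1 : ∑ i, r i • g₁ i = ∑ i, s i • g₂ i := by rw [← hrsum, ← hssum]
      have h2 : ∑ i, r i • g₁ i
          = r (Fin.last n) • w₁ + ∑ i ∈ univ.erase (Fin.last n), r i • g i := by
        rw [← Finset.add_sum_erase univ (fun i => r i • g₁ i) (mem_univ (Fin.last n)),
          hw1val]
        congr 1
        refine Finset.sum_congr rfl ?_
        intro i hi
        rw [hg₁, Function.update_of_ne (Finset.mem_erase.mp hi).1]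
      have h3 : ∑ i, s i • g₂ i
          = s (Fin.last n) • w₂ + ∑ i ∈ univ.erase (Fin.last n), s i • g i := by
        rw [← Finset.add_sum_erase univ (fun i => s i • g₂ i) (mem_univ (Fin.last n)),
          hw2val]
        congr 1
        refine Finset.sum_congr rfl ?_
        intro i hi
        rw [hg₂, Function.update_of_ne (Finset.mem_erase.mp hi).1]
      have h4 : ∑ i, e i • g i = ∑ i ∈ univ.erase (Fin.last n), (s i - r i) • g i := by
        rw [← Finset.add_sum_erase univ (fun i => e i • g i) (mem_univ (Fin.last n))]
        simp only [he, if_pos rfl, zero_smul, zero_add]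
        refine Finset.sum_congr rfl ?_
        intro i hi
        rw [if_neg (Finset.mem_erase.mp hi).1]
      rw [h2, h3] at h1
      rw [h4]
      have h5 : ∑ i ∈ univ.erase (Fin.last n), (s i - r i) • g i
          = ∑ i ∈ univ.erase (Fin.last n), s i • g i
            - ∑ i ∈ univ.erase (Fin.last n), r i • g i := by
        rw [← Finset.sum_sub_distrib]
        refine Finset.sum_congr rfl (fun i _ => sub_smul _ _ _)
      rw [h5, neg_smul, neg_smul]
      linear_combination (norm := module) (-1 : ℤ) • h1
    rw [hA, hB, sum_pos_eq e g]
    have hiteA : (fun i => if i = Fin.last n then -r (Fin.last n) else e i) (Fin.last n)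
        • g₁ (Fin.last n) = (-r (Fin.last n)) • w₁ := by simp [hw1val]
    have hiteB : (fun j => if j = Fin.last n then -s (Fin.last n) else -e j) (Fin.last n)
        • g₂ (Fin.last n) = (-s (Fin.last n)) • w₂ := by simp [hw2val]
    rw [hiteA, hiteB, ← hcore]
    abel
  obtain ⟨σ, hσ, hσ'⟩ := huniq g₁ hg1mem g₂ hg2mem _ _ _ _
    (by
      intro i hi
      rcases Finset.mem_insert.mp hi with h | h
      · rw [h]; simpa using hrneg
      · have hine : i ≠ Fin.last n := by
          intro hh; rw [hh] at h; simp [he] at h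
        simp only [if_neg hine]
        simp only [mem_filter] at h
        omega)
    (by
      intro j hj
      rcases Finset.mem_insert.mp hj with h | h
      · rw [h]; simpa using hsneg
      · have hjne : j ≠ Fin.last n := by
          intro hh; rw [hh] at h; simp [he] at h
        simp only [if_neg hjne]
        simp only [mem_filter] at h
        omega)
    hmain
  have hlastI' : Fin.last n ∈ insert (Fin.last n) (univ.filter (fun i => e i < 0)) :=
    Finset.mem_insert_self _ _
  obtain ⟨_, heq2⟩ := hσ' (Fin.last n) hlastI'
  rw [hw2val] at heq2
  have hσmem := hσ.mapsTo (by exact_mod_cast hlastI')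
  simp only [Finset.coe_insert, Set.mem_insert_iff, Finset.coe_filter] at hσmem
  rcases hσmem with h | h
  · rw [heq2, h, hw1val]
  · exfalso
    have hne' : σ (Fin.last n) ≠ Fin.last n := by
      intro hh; rw [hh] at h; simp [he] at h
    have : g₂ (σ (Fin.last n)) = g₂ (Fin.last n) := by
      rw [hw2val, heq2, hg₁, Function.update_of_ne hne', hg₂,
        Function.update_of_ne hne']
    exact hne' (hg2inj this)
end

section
/- Let G_T be a G-system at t₀. For any basis G_t in G_T and any subset J ⊆ G_{t₀}, there exists a unique basis G_{t'} in G_T satisfying: (a) J ⊆ G_{t'}; (b) writing each g_{k;t} = ∑ᵢ r'_{ik} g_{i;t'} in the basis G_{t'}, the coefficients r'_{ik} are ≥ 0 for every i with g_{i;t'} ∉ J. (Existence and uniqueness of the co-Bongartz completion T_J(G_t).) -/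
/-- A `G`-system at `t₀` (Definition 5.1.1): a collection of ℤ-bases of ℤⁿ, indexed by `T`,
satisfying the Mutation Condition, the Co-Bongartz Completion Condition and the
Uniqueness Condition. -/
structure GSystem (n : ℕ) (T : Type) (t₀ : T) where
  g : T → Fin n → (Fin n → ℤ)
  indep : ∀ t, LinearIndependent ℤ (g t)
  span : ∀ t, Submodule.span ℤ (Set.range (g t)) = ⊤
  mutation : ∀ (t : T) (k : Fin n), ∃ t₁ : T,
    Set.range (g t) ∩ Set.range (g t₁) = Set.range (g t) \ {g t k}
  coBongartz : ∀ (t : T) (J : Set (Fin n → ℤ)), J ⊆ Set.range (g t₀) →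
    ∃ t' : T, J ⊆ Set.range (g t') ∧
      ∀ (k : Fin n) (r : Fin n → ℤ), g t k = ∑ i, r i • g t' i →
        ∀ i, g t' i ∉ J → 0 ≤ r i
  uniqueness : ∀ (u v : T) (I I' : Finset (Fin n)) (r r' : Fin n → ℤ),
    (∀ i ∈ I, 0 < r i) → (∀ j ∈ I', 0 < r' j) →
    (∑ i ∈ I, r i • g u i) = (∑ j ∈ I', r' j • g v j) →
    ∃ σ : Fin n → Fin n, Set.BijOn σ ↑I' ↑I ∧
      ∀ j ∈ I', r' j = r (σ j) ∧ g v j = g u (σ j)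

/-- `G_{t'}` is a co-Bongartz completion of `J` with respect to `G_t`
(conditions (a) and (b) of Proposition-Definition 5.1.4). -/
def GSystem.IsCoB {n : ℕ} {T : Type} {t₀ : T} (S : GSystem n T t₀)
    (J : Set (Fin n → ℤ)) (t t' : T) : Prop :=
  J ⊆ Set.range (S.g t') ∧
  ∀ (k : Fin n) (r : Fin n → ℤ), S.g t k = ∑ i, r i • S.g t' i →
    ∀ i, S.g t' i ∉ J → 0 ≤ r i

/-- `G_{t'}` is the mutation of `G_t` at `g_{k;t}`, i.e.
`G_t ∩ G_{t'} = G_t \ {g_{k;t}}` (Proposition-Definition 5.1.3). -/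
def GSystem.IsMutationAt {n : ℕ} {T : Type} {t₀ : T} (S : GSystem n T t₀)
    (t t' : T) (k : Fin n) : Prop :=
  Set.range (S.g t) ∩ Set.range (S.g t') = Set.range (S.g t) \ {S.g t k}

lemma aux_sum {n : ℕ} (g1 g2 : Fin n → (Fin n → ℤ)) (hinj : Function.Injective g1)
    (w : Fin n → ℤ) (hw : ∀ j, w j ≠ 0 → g2 j ∈ Set.range g1) :
    ∑ i, (∑ j, if g2 j = g1 i then w j else 0) • g1 i = ∑ j, w j • g2 j := by
  have : ∀ i, (∑ j, if g2 j = g1 i then w j else 0) • g1 i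
      = ∑ j, (if g2 j = g1 i then w j else 0) • g1 i := fun i => Finset.sum_smul
  simp_rw [this]
  rw [Finset.sum_comm]
  refine Finset.sum_congr rfl fun j _ => ?_
  by_cases hj : w j = 0
  · simp [hj]
  · obtain ⟨i₁, hi₁⟩ := hw j hj
    rw [Fintype.sum_eq_single i₁ ?_]
    · rw [if_pos hi₁.symm, hi₁]
    · intro i hi
      rw [if_neg, zero_smul]
      intro hgg
      exact hi (hinj (hgg.symm.trans hi₁.symm))

lemma GSystem.coB_range_subset {n : ℕ} {T : Type} {t₀ : T} (S : GSystem n T t₀) (t : T)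
    (J : Set (Fin n → ℤ)) {t' t'' : T} (h' : S.IsCoB J t t') (h'' : S.IsCoB J t t'') :
    Set.range (S.g t') ⊆ Set.range (S.g t'') := by
  rintro x ⟨i₀, rfl⟩
  by_cases hxJ : S.g t' i₀ ∈ J
  · exact h''.1 hxJ
  have hinj' : Function.Injective (S.g t') := (S.indep t').injective
  have hinj'' : Function.Injective (S.g t'') := (S.indep t'').injective
  set b' : Module.Basis (Fin n) ℤ (Fin n → ℤ) := Module.Basis.mk (S.indep t') (S.span t').ge with hb'def
  set b'' : Module.Basis (Fin n) ℤ (Fin n → ℤ) := Module.Basis.mk (S.indep t'') (S.span t'').ge with hb''def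
  have hb' : ∀ i, b' i = S.g t' i := fun i => by rw [hb'def, Module.Basis.coe_mk]
  have hb'' : ∀ i, b'' i = S.g t'' i := fun i => by rw [hb''def, Module.Basis.coe_mk]
  -- find k with nonzero i₀-coordinate
  obtain ⟨k, hk⟩ : ∃ k, b'.repr (S.g t k) i₀ ≠ 0 := by
    by_contra h
    push_neg at h
    have hmem : S.g t' i₀ ∈ Submodule.span ℤ (Set.range (S.g t)) := by
      rw [S.span t]; trivial
    obtain ⟨cc, hcc⟩ := (Submodule.mem_span_range_iff_exists_fun ℤ).1 hmem
    have h1 : b'.repr (S.g t' i₀) i₀ = 1 := by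
      rw [← hb' i₀]; simp
    rw [← hcc] at h1
    simp only [map_sum, map_smul, Finsupp.coe_finset_sum, Finset.sum_apply,
      Finsupp.coe_smul, Pi.smul_apply, smul_eq_mul] at h1
    simp only [h, mul_zero, Finset.sum_const_zero] at h1
    exact one_ne_zero h1.symm
  set r : Fin n → ℤ := fun i => b'.repr (S.g t k) i with hrdef
  set r' : Fin n → ℤ := fun j => b''.repr (S.g t k) j with hr'def
  have hr : S.g t k = ∑ i, r i • S.g t' i := by
    have := b'.sum_repr (S.g t k)
    simp only [hb'] at this
    exact this.symm
  have hr' : S.g t k = ∑ j, r' j • S.g t'' j := by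
    have := b''.sum_repr (S.g t k)
    simp only [hb''] at this
    exact this.symm
  have hri₀ : 0 < r i₀ := lt_of_le_of_ne (h'.2 k r hr i₀ hxJ) (Ne.symm hk)
  set np : Fin n → ℤ := fun i => if r i < 0 then -r i else 0 with hnp
  set np' : Fin n → ℤ := fun j => if r' j < 0 then -r' j else 0 with hnp'
  have hnp0 : ∀ i, 0 ≤ np i := fun i => by rw [hnp]; beta_reduce; split <;> omega
  have hnp'0 : ∀ j, 0 ≤ np' j := fun j => by rw [hnp']; beta_reduce; split <;> omega
  have hnpJ : ∀ i, np i ≠ 0 → S.g t' i ∈ Set.range (S.g t'') := by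
    intro i hi
    apply h''.1
    by_contra hno
    have := h'.2 k r hr i hno
    rw [hnp] at hi; beta_reduce at hi
    split at hi <;> omega
  have hnp'J : ∀ j, np' j ≠ 0 → S.g t'' j ∈ Set.range (S.g t') := by
    intro j hj
    apply h'.1
    by_contra hno
    have := h''.2 k r' hr' j hno
    rw [hnp'] at hj; beta_reduce at hj
    split at hj <;> omega
  set ex' : Fin n → ℤ := fun i => ∑ j, if S.g t'' j = S.g t' i then np' j else 0 with hex'
  set ex'' : Fin n → ℤ := fun j => ∑ i, if S.g t' i = S.g t'' j then np i else 0 with hex''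
  have hex'0 : ∀ i, 0 ≤ ex' i := fun i => by
    rw [hex']; dsimp only
    exact Finset.sum_nonneg fun j _ => by split <;> [exact hnp'0 j; rfl]
  have hex''0 : ∀ j, 0 ≤ ex'' j := fun j => by
    rw [hex'']; dsimp only
    exact Finset.sum_nonneg fun i _ => by split <;> [exact hnp0 i; rfl]
  set c : Fin n → ℤ := fun i => r i + np i + ex' i with hc
  set d : Fin n → ℤ := fun j => r' j + np' j + ex'' j with hd
  have hc0 : ∀ i, 0 ≤ c i := by
    intro i
    rw [hc]; dsimp only
    have := hex'0 i
    rw [hnp]; beta_reduce; split <;> omega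
  have hd0 : ∀ j, 0 ≤ d j := by
    intro j
    rw [hd]; dsimp only
    have := hex''0 j
    rw [hnp']; beta_reduce; split <;> omega
  -- key sum identity
  have hsum' : ∑ i, ex' i • S.g t' i = ∑ j, np' j • S.g t'' j := by
    rw [hex']
    exact aux_sum (S.g t') (S.g t'') hinj' np' (fun j hj => hnp'J j hj)
  have hsum'' : ∑ j, ex'' j • S.g t'' j = ∑ i, np i • S.g t' i := by
    rw [hex'']
    exact aux_sum (S.g t'') (S.g t') hinj'' np (fun i hi => hnpJ i hi)
  have heq : ∑ i, c i • S.g t' i = ∑ j, d j • S.g t'' j := by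
    have lhs : ∑ i, c i • S.g t' i
        = (∑ i, r i • S.g t' i) + (∑ i, np i • S.g t' i) + (∑ j, np' j • S.g t'' j) := by
      rw [← hsum']
      simp only [hc, add_smul, Finset.sum_add_distrib]
    have rhs : ∑ j, d j • S.g t'' j
        = (∑ j, r' j • S.g t'' j) + (∑ j, np' j • S.g t'' j) + (∑ i, np i • S.g t' i) := by
      rw [← hsum'']
      simp only [hd, add_smul, Finset.sum_add_distrib]
    rw [lhs, rhs, ← hr, ← hr']
    abel
  set I : Finset (Fin n) := Finset.univ.filter (fun i => 0 < c i) with hI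
  set I' : Finset (Fin n) := Finset.univ.filter (fun j => 0 < d j) with hI'
  have hsI : ∑ i ∈ I, c i • S.g t' i = ∑ i, c i • S.g t' i := by
    refine Finset.sum_subset (Finset.filter_subset _ _) fun i _ hi => ?_
    rw [hI] at hi
    simp only [Finset.mem_filter, Finset.mem_univ, true_and, not_lt] at hi
    have : c i = 0 := le_antisymm hi (hc0 i)
    rw [this, zero_smul]
  have hsI' : ∑ j ∈ I', d j • S.g t'' j = ∑ j, d j • S.g t'' j := by
    refine Finset.sum_subset (Finset.filter_subset _ _) fun j _ hj => ?_
    rw [hI'] at hj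
    simp only [Finset.mem_filter, Finset.mem_univ, true_and, not_lt] at hj
    have : d j = 0 := le_antisymm hj (hd0 j)
    rw [this, zero_smul]
  obtain ⟨σ, hbij, hmatch⟩ := S.uniqueness t' t'' I I' c d
    (fun i hi => (Finset.mem_filter.1 hi).2) (fun j hj => (Finset.mem_filter.1 hj).2)
    (by rw [hsI, hsI', heq])
  have hI₀ : i₀ ∈ I := by
    rw [hI]
    refine Finset.mem_filter.2 ⟨Finset.mem_univ _, ?_⟩
    rw [hc]; dsimp only
    have h1 : np i₀ = 0 := by rw [hnp]; beta_reduce; split <;> omega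
    have := hex'0 i₀
    omega
  obtain ⟨j, hj, hσj⟩ := hbij.2.2 (show i₀ ∈ (I : Set (Fin n)) from hI₀)
  refine ⟨j, ?_⟩
  have := (hmatch j hj).2
  rw [hσj] at this
  exact this

/-- Proposition-Definition 5.1.4: existence and uniqueness of the co-Bongartz
completion `T_J(G_t)` in a `G`-system. -/
theorem stmt1 {n : ℕ} {T : Type} {t₀ : T} (S : GSystem n T t₀) (t : T)
    (J : Set (Fin n → ℤ)) (hJ : J ⊆ Set.range (S.g t₀)) :
    ∃ t' : T, S.IsCoB J t t' ∧
      ∀ t'' : T, S.IsCoB J t t'' → Set.range (S.g t'') = Set.range (S.g t') := by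
  obtain ⟨t', h1, h2⟩ := S.coBongartz t J hJ
  refine ⟨t', ⟨h1, h2⟩, fun t'' h'' => ?_⟩
  exact le_antisymm (S.coB_range_subset t J h'' ⟨h1, h2⟩) (S.coB_range_subset t J ⟨h1, h2⟩ h'')
end

section
/- Let G_T be a G-system at t₀, let G_t ∈ G_T, and let G_{t'} = μ_{g_{n;t}}(G_t) be the mutation of G_t at g_{n;t} (so G_{t'} agrees with G_t except in the n-th vector). If the new vector g_{n;t'} belongs to the initial basis G_{t₀}, then G_{t'} equals the elementary co-Bongartz completion T_{{g_{n;t'}}}(G_t). -/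
/-- Theorem 5.1.6: if `G_{t'} = μ_{g_{n;t}}(G_t)` and the new vector `g_{n;t'}`
(the unique element of `G_{t'} \ G_t`) belongs to the initial basis `G_{t₀}`,
then `G_{t'}` is the elementary co-Bongartz completion `T_{g_{n;t'}}(G_t)`. -/
theorem stmt2 {n : ℕ} {T : Type} {t₀ : T} (S : GSystem (n + 1) T t₀) (t t' : T)
    (hmut : S.IsMutationAt t t' (Fin.last n))
    (w : Fin (n + 1) → ℤ)
    (hw : w ∈ Set.range (S.g t') \ Set.range (S.g t))
    (hw0 : w ∈ Set.range (S.g t₀)) :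
    S.IsCoB {w} t t' := by
  classical
  obtain ⟨hw', hwt⟩ := hw
  have hmut' : Set.range (S.g t) ∩ Set.range (S.g t')
      = Set.range (S.g t) \ {S.g t (Fin.last n)} := hmut
  have hinj : ∀ u : T, Function.Injective (S.g u) := fun u => (S.indep u).injective
  -- the co-Bongartz completion `t''` of `{w}` with respect to `t`
  obtain ⟨t'', ht''w, hpos⟩ := S.coBongartz t {w} (Set.singleton_subset_iff.mpr hw0)
  have hwmem'' : w ∈ Set.range (S.g t'') := ht''w rfl
  obtain ⟨i₀, hi₀⟩ := hwmem''
  obtain ⟨j', hj'⟩ := hw'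
  -- Step B : every common vector of `G_t` and `G_{t'}` lies in `G_{t''}`
  have stepB : ∀ x ∈ Set.range (S.g t) ∩ Set.range (S.g t'),
      x ∈ Set.range (S.g t'') := by
    rintro x ⟨⟨k, hk⟩, ⟨j, hj⟩⟩
    have hx : x ∈ Submodule.span ℤ (Set.range (S.g t'')) := by
      rw [S.span]; trivial
    obtain ⟨r, hr⟩ := (Submodule.mem_span_range_iff_exists_fun ℤ).mp hx
    have hrpos : ∀ i, i ≠ i₀ → 0 ≤ r i := by
      intro i hi
      refine hpos k r (hk.trans hr.symm) i ?_
      simp only [Set.mem_singleton_iff]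
      rw [← hi₀]
      exact fun h => hi (hinj t'' h)
    set I : Finset (Fin (n + 1)) := Finset.univ.filter (fun i => 0 < r i) with hI
    have hIpos : ∀ i ∈ I, 0 < r i := fun i hi => (Finset.mem_filter.mp hi).2
    by_cases hc : 0 ≤ r i₀
    · have hrnn : ∀ i, 0 ≤ r i := by
        intro i
        by_cases h : i = i₀
        · exact h ▸ hc
        · exact hrpos i h
      have hsum : ∑ i ∈ I, r i • S.g t'' i = ∑ i, r i • S.g t'' i := by
        refine Finset.sum_subset (Finset.subset_univ I) fun i _ hi => ?_
        have h0 : r i = 0 := le_antisymm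
          (not_lt.mp (by simpa [hI] using hi)) (hrnn i)
        simp [h0]
      have heq : ∑ i ∈ I, r i • S.g t'' i
          = ∑ i ∈ ({j} : Finset (Fin (n + 1))), (fun _ => (1 : ℤ)) i • S.g t' i := by
        rw [hsum, hr, Finset.sum_singleton, one_smul, hj]
      obtain ⟨σ, hσbij, hσ⟩ := S.uniqueness t'' t' I {j} r (fun _ => 1) hIpos
        (fun _ _ => one_pos) heq
      refine ⟨σ j, ?_⟩
      rw [← (hσ j (Finset.mem_singleton_self j)).2, hj]
    · push_neg at hc
      have hi₀I : i₀ ∉ I := by simp [hI, not_lt.mpr hc.le]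
      have hsum : ∑ i, r i • S.g t'' i
          = (∑ i ∈ I, r i • S.g t'' i) + r i₀ • w := by
        rw [← hi₀]
        have : ∑ i, r i • S.g t'' i = ∑ i ∈ insert i₀ I, r i • S.g t'' i := by
          refine (Finset.sum_subset (Finset.subset_univ _) fun i _ hi => ?_).symm
          simp only [Finset.mem_insert, not_or] at hi
          have h0 : r i = 0 := le_antisymm
            (not_lt.mp (by simpa [hI] using hi.2)) (hrpos i hi.1)
          simp [h0]
        rw [this, Finset.sum_insert hi₀I]
        exact add_comm _ _
      have hjj' : j ≠ j' := by
        intro h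
        exact hwt (hj' ▸ h ▸ hj ▸ ⟨k, hk⟩)
      have heq : ∑ i ∈ I, r i • S.g t'' i
          = ∑ i ∈ ({j, j'} : Finset (Fin (n + 1))),
              (fun i => if i = j then 1 else -r i₀) i • S.g t' i := by
        rw [Finset.sum_pair hjj']
        simp only [if_pos rfl, eq_self_iff_true, if_true, if_neg hjj'.symm, one_smul, hj, hj']
        have hx' : (∑ i ∈ I, r i • S.g t'' i) + r i₀ • w = x := hsum.symm.trans hr
        have := eq_sub_of_add_eq hx'
        rw [this, sub_eq_add_neg, ← neg_smul]
      obtain ⟨σ, hσbij, hσ⟩ := S.uniqueness t'' t' I {j, j'} r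
        (fun i => if i = j then 1 else -r i₀) hIpos
        (by
          intro i hi
          by_cases h : i = j
          · simp [h]
          · simp [h, hc])
        heq
      refine ⟨σ j, ?_⟩
      have := (hσ j (by simp)).2
      rw [← this, hj]
  -- Step C : `G_{t'}` and `G_{t''}` have the same underlying set
  have hfin : ∀ u : T, (Set.range (S.g u)).Finite := fun u => Set.finite_range _
  have hcard : ∀ u : T, (Set.range (S.g u)).ncard = n + 1 := by
    intro u
    rw [← Set.image_univ, Set.ncard_image_of_injective _ (hinj u), Set.ncard_univ]
    simp
  set B : Set (Fin (n + 1) → ℤ) := Set.range (S.g t) \ {S.g t (Fin.last n)} with hB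
  have hBfin : B.Finite := (hfin t).diff
  have hBcard : B.ncard = n := by
    rw [hB, Set.ncard_diff_singleton_of_mem (Set.mem_range_self (Fin.last n)), hcard t]
    omega
  have hwB : w ∉ B := fun h => hwt h.1
  have hBt' : B ⊆ Set.range (S.g t') := by
    intro x hx
    rw [← hmut'] at hx
    exact hx.2
  have hBt'' : B ⊆ Set.range (S.g t'') := by
    intro x hx
    refine stepB x ?_
    rw [hmut']
    exact hx
  have hkey : ∀ u : T, w ∈ Set.range (S.g u) → B ⊆ Set.range (S.g u) →
      Set.range (S.g u) = insert w B := by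
    intro u hwu hBu
    refine (Set.eq_of_subset_of_ncard_le (Set.insert_subset hwu hBu) ?_ (hfin u)).symm
    rw [hcard u, Set.ncard_insert_of_notMem hwB hBfin, hBcard]
  have hR : Set.range (S.g t') = Set.range (S.g t'') := by
    rw [hkey t' ⟨j', hj'⟩ hBt', hkey t'' ⟨i₀, hi₀⟩ hBt'']
  -- the permutation identifying the two bases
  have hπ : ∀ i, ∃ j, S.g t'' j = S.g t' i := by
    intro i
    have : S.g t' i ∈ Set.range (S.g t'') := by
      rw [← hR]; exact ⟨i, rfl⟩
    exact this
  choose π hπ' using hπ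
  have hπinj : Function.Injective π := by
    intro a b h
    exact hinj t' (by rw [← hπ' a, ← hπ' b, h])
  have hπbij := Finite.injective_iff_bijective.mp hπinj
  let e : Fin (n + 1) ≃ Fin (n + 1) := Equiv.ofBijective π hπbij
  have he : ∀ i, S.g t'' (e i) = S.g t' i := by
    intro i
    simpa [e, Equiv.ofBijective_apply] using hπ' i
  constructor
  · exact Set.singleton_subset_iff.mpr ⟨j', hj'⟩
  · intro k r hk i hi
    have heq : S.g t k = ∑ j, (fun j => r (e.symm j)) j • S.g t'' j := by
      rw [hk, ← Equiv.sum_comp e (fun j => r (e.symm j) • S.g t'' j)]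
      refine Finset.sum_congr rfl fun i _ => ?_
      rw [Equiv.symm_apply_apply, he]
    have hne : S.g t'' (e i) ∉ ({w} : Set (Fin (n + 1) → ℤ)) := by
      rw [he]; exact hi
    have := hpos k _ heq (e i) hne
    simpa using this
end

section
/- (Row sign-coherence in G-systems) Let G_T be a G-system at t₀. For any G_t ∈ G_T, let R be the transition matrix from the initial basis G_{t₀} to G_t, i.e., (g_{1;t},…,g_{n;t}) = (g_{1;t₀},…,g_{n;t₀})·R. Then every row of R is either a nonnegative vector or a nonpositive vector. -/
/-- Theorem 5.1.8 (row sign-coherence): for any `G_t` in a `G`-system at `t₀`,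
the transition matrix `R` from the initial basis `G_{t₀}` to `G_t`
(`g_{j;t} = ∑ᵢ R i j • g_{i;t₀}`) is row sign-coherent: each row is either
nonnegative or nonpositive. -/
theorem stmt4 {n : ℕ} {T : Type} {t₀ : T} (S : GSystem n T t₀) (t : T)
    (R : Matrix (Fin n) (Fin n) ℤ)
    (hR : ∀ j : Fin n, S.g t j = ∑ i, R i j • S.g t₀ i) :
    ∀ i : Fin n, (∀ j, 0 ≤ R i j) ∨ (∀ j, R i j ≤ 0) := by
  classical
  intro i
  set J : Set (Fin n → ℤ) := Set.range (S.g t₀) \ {S.g t₀ i} with hJdef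
  obtain ⟨t', hJt', hcob⟩ := S.coBongartz t J Set.diff_subset
  have inj₀ : Function.Injective (S.g t₀) := (S.indep t₀).injective
  have inj' : Function.Injective (S.g t') := (S.indep t').injective
  let B₀ : Module.Basis (Fin n) ℤ (Fin n → ℤ) := Module.Basis.mk (S.indep t₀) (le_of_eq (S.span t₀).symm)
  let B' : Module.Basis (Fin n) ℤ (Fin n → ℤ) := Module.Basis.mk (S.indep t') (le_of_eq (S.span t').symm)
  have hB₀ : ∀ l, B₀ l = S.g t₀ l := fun l => by simp [B₀]
  have hB' : ∀ l, B' l = S.g t' l := fun l => by simp [B']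
  set c : Fin n → Fin n → ℤ := fun j => B'.equivFun (S.g t j) with hc
  have hexp : ∀ j, S.g t j = ∑ l, c j l • S.g t' l := by
    intro j
    calc S.g t j = ∑ l, B'.equivFun (S.g t j) l • B' l := (B'.sum_equivFun (S.g t j)).symm
      _ = ∑ l, c j l • S.g t' l := by simp only [hB', hc]
  set d : Fin n → ℤ := fun l => B₀.equivFun (S.g t' l) i with hd
  have hRd : ∀ j, R i j = ∑ l, c j l * d l := by
    intro j
    have h1 : B₀.equivFun.symm (fun l => R l j) = S.g t j := by
      rw [B₀.equivFun_symm_apply, hR j]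
      simp only [hB₀]
    have h2 : (fun l => R l j) = B₀.equivFun (S.g t j) := by
      rw [← h1, LinearEquiv.apply_symm_apply]
    have h3 : R i j = B₀.equivFun (S.g t j) i := congrFun h2 i
    rw [h3, hexp j, map_sum, Finset.sum_apply]
    refine Finset.sum_congr rfl fun l _ => ?_
    rw [map_smul, Pi.smul_apply, smul_eq_mul]
  have hzero : ∀ l, S.g t' l ∈ J → d l = 0 := by
    intro l hl
    obtain ⟨⟨m, hm⟩, hne⟩ := hl
    have hmi : m ≠ i := by
      intro h; apply hne; rw [← hm, h]; rfl
    have hv : S.g t' l = B₀ m := by rw [hB₀, hm]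
    have : d l = B₀.equivFun (B₀ m) i := by
      show B₀.equivFun (S.g t' l) i = _
      rw [hv]
    rw [this, B₀.equivFun_self]
    simp [hmi]
  by_cases hK : ∃ l, S.g t' l ∉ J
  · obtain ⟨i₀, hi₀⟩ := hK
    have huniq : ∀ l, S.g t' l ∉ J → l = i₀ := by
      intro l hl
      by_contra hne
      -- counting argument
      set F : Finset (Fin n → ℤ) := Finset.univ.image (S.g t₀) with hF
      have hFcard : F.card = n := by
        rw [hF, Finset.card_image_of_injective _ inj₀, Finset.card_univ, Fintype.card_fin]
      set J' : Finset (Fin n → ℤ) := F.erase (S.g t₀ i) with hJ'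
      have hmemJ : ∀ x, x ∈ J' ↔ x ∈ J := by
        intro x
        simp [hJ', hF, hJdef, Set.mem_diff, and_comm]
      have hJcard : J'.card = n - 1 := by
        rw [hJ', Finset.card_erase_of_mem (by simp [hF]), hFcard]
      have hsub : J' ⊆ (Finset.univ \ {l, i₀}).image (S.g t') := by
        intro x hx
        have hxJ : x ∈ J := (hmemJ x).mp hx
        obtain ⟨m, hm⟩ := hJt' hxJ
        rw [Finset.mem_image]
        refine ⟨m, ?_, hm⟩
        simp only [Finset.mem_sdiff, Finset.mem_univ, true_and, Finset.mem_insert,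
          Finset.mem_singleton]
        rintro (rfl | rfl)
        · exact hl (by rw [hm]; exact hxJ)
        · exact hi₀ (by rw [hm]; exact hxJ)
      have hle : J'.card ≤ n - 2 := by
        calc J'.card ≤ ((Finset.univ \ {l, i₀}).image (S.g t')).card :=
              Finset.card_le_card hsub
          _ ≤ (Finset.univ \ ({l, i₀} : Finset (Fin n))).card := Finset.card_image_le
          _ = n - 2 := by
              rw [Finset.card_sdiff_of_subset (Finset.subset_univ _), Finset.card_univ, Fintype.card_fin]
              rw [Finset.card_insert_of_notMem (by simpa using hne), Finset.card_singleton]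
      have hn : 1 ≤ n := i.pos
      omega
    have hdl : ∀ l, l ≠ i₀ → d l = 0 := by
      intro l hl
      by_cases h : S.g t' l ∈ J
      · exact hzero l h
      · exact absurd (huniq l h) hl
    have hRj : ∀ j, R i j = c j i₀ * d i₀ := by
      intro j
      rw [hRd j]
      rw [Finset.sum_eq_single i₀]
      · intro b _ hb; rw [hdl b hb, mul_zero]
      · intro h; exact absurd (Finset.mem_univ i₀) h
    have hcpos : ∀ j, 0 ≤ c j i₀ := fun j => hcob j (c j) (hexp j) i₀ hi₀
    rcases le_or_gt 0 (d i₀) with h | h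
    · left; intro j; rw [hRj j]; exact mul_nonneg (hcpos j) h
    · right; intro j; rw [hRj j]; exact mul_nonpos_of_nonneg_of_nonpos (hcpos j) h.le
  · push_neg at hK
    left
    intro j
    rw [hRd j]
    apply le_of_eq
    symm
    apply Finset.sum_eq_zero
    intro l _
    rw [hzero l (hK l), mul_zero]
end

section
/- Let G_T be a G-system at t₀, G_t ∈ G_T, and let J = J₁ ⊔ J₂ be a disjoint union of subsets of G_{t₀}. Then T_{J₂}(T_{J₁}(G_t)) = T_J(G_t) = T_{J₁}(T_{J₂}(G_t)); that is, co-Bongartz completions along disjoint subsets of the initial basis commute and compose to the co-Bongartz completion along their union. -/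
namespace GSystem

open scoped Classical

variable {n : ℕ} {T : Type} {t₀ : T} (S : GSystem n T t₀)

noncomputable def basis (t : T) : Module.Basis (Fin n) ℤ (Fin n → ℤ) :=
  Module.Basis.mk (S.indep t) (le_of_eq (S.span t).symm)

lemma basis_apply (t : T) (i : Fin n) : S.basis t i = S.g t i := by
  simp [basis]

lemma sum_repr (t : T) (x : Fin n → ℤ) :
    ∑ i, (S.basis t).repr x i • S.g t i = x := by
  simpa only [S.basis_apply] using (S.basis t).sum_repr x

lemma g_injective (t : T) : Function.Injective (S.g t) :=
  (S.indep t).injective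

lemma sum_indicator_smul (τ : T) (J : Set (Fin n → ℤ)) (hfin : J.Finite)
    (hsub : J ⊆ Set.range (S.g τ)) :
    ∑ x ∈ hfin.toFinset, x = ∑ i, (if S.g τ i ∈ J then (1 : ℤ) else 0) • S.g τ i := by
  have : ∑ i, (if S.g τ i ∈ J then (1 : ℤ) else 0) • S.g τ i
      = ∑ i ∈ Finset.univ.filter (fun i => S.g τ i ∈ J), S.g τ i := by
    simp only [ite_smul, one_smul, zero_smul, Finset.sum_filter]
  rw [this]
  refine (Finset.sum_bij (fun i _ => S.g τ i) ?_ ?_ ?_ ?_).symm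
  · intro a ha; simp only [Finset.mem_filter] at ha; simpa using ha.2
  · intro a₁ _ a₂ _ h; exact S.g_injective τ h
  · intro b hb
    simp only [Set.Finite.mem_toFinset] at hb
    obtain ⟨i, hi⟩ := hsub hb
    exact ⟨i, by simp [Finset.mem_filter, hi, hb], hi⟩
  · intro a _; rfl

lemma repr_sum_indicator (τ : T) (J : Set (Fin n → ℤ)) (hfin : J.Finite)
    (hsub : J ⊆ Set.range (S.g τ)) (q : Fin n) :
    (S.basis τ).repr (∑ x ∈ hfin.toFinset, x) q = if S.g τ q ∈ J then 1 else 0 := by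
  rw [S.sum_indicator_smul τ J hfin hsub]
  have : ∀ i : Fin n, (S.basis τ).repr (S.g τ i) = Finsupp.single i 1 := by
    intro i; rw [← S.basis_apply]; exact (S.basis τ).repr_self i
  rw [map_sum, Finsupp.finset_sum_apply]
  rw [Finset.sum_eq_single q]
  · rw [map_smul, this, Finsupp.smul_apply, Finsupp.single_eq_same, smul_eq_mul, mul_one]
  · intro i _ hiq
    rw [map_smul, this, Finsupp.smul_apply, Finsupp.single_eq_of_ne hiq.symm, smul_zero]
  · intro h; exact absurd (Finset.mem_univ q) h

lemma range_eq_of_span (f : Fin n → (Fin n → ℤ)) (hf : LinearIndependent ℤ f)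
    (s : Set (Fin n → ℤ)) (hsub : s ⊆ Set.range f)
    (htop : Submodule.span ℤ s = ⊤) : s = Set.range f := by
  refine Set.Subset.antisymm hsub ?_
  rintro _ ⟨i, rfl⟩
  by_contra h
  have hi : i ∉ f ⁻¹' s := h
  have := hf.notMem_span_image hi
  rw [Set.image_preimage_eq_of_subset hsub, htop] at this
  exact this trivial



lemma exists_bound (f h : Fin n → ℤ) : ∃ M : ℤ, (∀ i, |f i| < M) ∧ (∀ i, |h i| < M) := by
  refine ⟨1 + ∑ i, (|f i| + |h i|), fun i => ?_, fun i => ?_⟩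
  · have h1 : |f i| + |h i| ≤ ∑ j, (|f j| + |h j|) :=
      Finset.single_le_sum (f := fun j => |f j| + |h j|)
        (fun j _ => by positivity) (Finset.mem_univ i)
    have h2 : (0:ℤ) ≤ |h i| := abs_nonneg _
    omega
  · have h1 : |f i| + |h i| ≤ ∑ j, (|f j| + |h j|) :=
      Finset.single_le_sum (f := fun j => |f j| + |h j|)
        (fun j _ => by positivity) (Finset.mem_univ i)
    have h2 : (0:ℤ) ≤ |f i| := abs_nonneg _
    omega

lemma coB_repr_nonneg {J : Set (Fin n → ℤ)} {t t' : T} (h : S.IsCoB J t t') (k i : Fin n)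
    (hi : S.g t' i ∉ J) : 0 ≤ (S.basis t').repr (S.g t k) i :=
  h.2 k (fun j => (S.basis t').repr (S.g t k) j) (S.sum_repr t' (S.g t k)).symm i hi

lemma key (t u v w : T) (J₁ J₂ : Set (Fin n → ℤ))
    (h₁ : J₁ ⊆ Set.range (S.g t₀)) (h₂ : J₂ ⊆ Set.range (S.g t₀))
    (hdisj : Disjoint J₁ J₂)
    (hu : S.IsCoB J₁ t u) (hv : S.IsCoB J₂ u v) (hw : S.IsCoB (J₁ ∪ J₂) t w) :
    Set.range (S.g v) = Set.range (S.g w) := by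
  have hfin₁ : J₁.Finite := (Set.finite_range (S.g t₀)).subset h₁
  have hfin₂ : J₂.Finite := (Set.finite_range (S.g t₀)).subset h₂
  set s₁ : Fin n → ℤ := ∑ x ∈ hfin₁.toFinset, x with hs₁def
  set s₂ : Fin n → ℤ := ∑ x ∈ hfin₂.toFinset, x with hs₂def
  set C : Set (Fin n → ℤ) := Set.range (S.g v) ∩ Set.range (S.g w) with hCdef
  have hJ₁w : J₁ ⊆ Set.range (S.g w) := Set.subset_union_left.trans hw.1
  have hJ₂w : J₂ ⊆ Set.range (S.g w) := Set.subset_union_right.trans hw.1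
  have main : ∀ k, S.g t k ∈ Submodule.span ℤ C := by
    intro k
    have ha : ∀ i, S.g u i ∉ J₁ → 0 ≤ (S.basis u).repr (S.g t k) i :=
      S.coB_repr_nonneg hu k
    have hc : ∀ p, S.g w p ∉ J₁ ∪ J₂ → 0 ≤ (S.basis w).repr (S.g t k) p :=
      S.coB_repr_nonneg hw k
    obtain ⟨M₁, hM₁a, hM₁c⟩ := exists_bound (fun i => (S.basis u).repr (S.g t k) i)
      (fun p => (S.basis w).repr (S.g t k) p)
    set vk : Fin n → ℤ := S.g t k + M₁ • s₁ with hvkdef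
    have hα : ∀ i, 0 ≤ (S.basis u).repr (S.g t k) i
        + M₁ * (if S.g u i ∈ J₁ then 1 else 0) := by
      intro i
      by_cases hi : S.g u i ∈ J₁
      · have h1 := hM₁a i
        have h2 := neg_abs_le ((S.basis u).repr (S.g t k) i)
        simp only [if_pos hi, mul_one]
        omega
      · simpa [hi] using ha i hi
    have hA : vk = ∑ i, ((S.basis u).repr (S.g t k) i
        + M₁ * (if S.g u i ∈ J₁ then 1 else 0)) • S.g u i := by
      rw [hvkdef, hs₁def, S.sum_indicator_smul u J₁ hfin₁ hu.1]
      conv_lhs => rw [← S.sum_repr u (S.g t k)]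
      rw [Finset.smul_sum, ← Finset.sum_add_distrib]
      refine Finset.sum_congr rfl fun i _ => ?_
      rw [smul_smul, ← add_smul]
    have hB : ∀ p, S.g v p ∉ J₂ → 0 ≤ (S.basis v).repr vk p := by
      intro p hp
      have hrepr : (S.basis v).repr vk p
          = ∑ i, ((S.basis u).repr (S.g t k) i
              + M₁ * (if S.g u i ∈ J₁ then 1 else 0)) * (S.basis v).repr (S.g u i) p := by
        rw [hA, map_sum, Finsupp.finset_sum_apply]
        simp only [map_smul, Finsupp.smul_apply, smul_eq_mul]
      rw [hrepr]
      exact Finset.sum_nonneg fun i _ =>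
        mul_nonneg (hα i) (S.coB_repr_nonneg hv i p hp)
    obtain ⟨M₂, hM₂v, hM₂c⟩ := exists_bound (fun p => (S.basis v).repr vk p)
      (fun p => (S.basis w).repr (S.g t k) p)
    set uk : Fin n → ℤ := vk + M₂ • s₂ with hukdef
    have hγ : ∀ p, (S.basis v).repr uk p
        = (S.basis v).repr vk p + M₂ * (if S.g v p ∈ J₂ then 1 else 0) := by
      intro p
      rw [hukdef, hs₂def]
      simp only [map_add, Finsupp.add_apply, map_smul, Finsupp.smul_apply, smul_eq_mul]
      rw [S.repr_sum_indicator v J₂ hfin₂ hv.1]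
    have hγ0 : ∀ p, 0 ≤ (S.basis v).repr uk p := by
      intro p
      rw [hγ p]
      by_cases hp : S.g v p ∈ J₂
      · have h1 := hM₂v p
        have h2 := neg_abs_le ((S.basis v).repr vk p)
        simp only [if_pos hp, mul_one]
        omega
      · simpa [hp] using hB p hp
    have hδ : ∀ p, (S.basis w).repr uk p
        = (S.basis w).repr (S.g t k) p + M₁ * (if S.g w p ∈ J₁ then 1 else 0)
          + M₂ * (if S.g w p ∈ J₂ then 1 else 0) := by
      intro p
      rw [hukdef, hvkdef, hs₁def, hs₂def]
      simp only [map_add, Finsupp.add_apply, map_smul, Finsupp.smul_apply, smul_eq_mul]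
      rw [S.repr_sum_indicator w J₁ hfin₁ hJ₁w, S.repr_sum_indicator w J₂ hfin₂ hJ₂w]
    have hδ0 : ∀ p, 0 ≤ (S.basis w).repr uk p := by
      intro p
      rw [hδ p]
      by_cases hp1 : S.g w p ∈ J₁
      · have hp2 : S.g w p ∉ J₂ := fun hp2 => Set.disjoint_left.mp hdisj hp1 hp2
        have h1 := hM₁c p
        have h2 := neg_abs_le ((S.basis w).repr (S.g t k) p)
        simp only [if_pos hp1, if_neg hp2, mul_one, mul_zero]
        omega
      · by_cases hp2 : S.g w p ∈ J₂
        · have h1 := hM₂c p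
          have h2 := neg_abs_le ((S.basis w).repr (S.g t k) p)
          simp only [if_pos hp2, if_neg hp1, mul_one, mul_zero]
          omega
        · have h3 := hc p (by simp [hp1, hp2])
          simp only [if_neg hp1, if_neg hp2, mul_zero]
          omega
    have hδpos : ∀ p, S.g w p ∈ J₁ ∪ J₂ → 0 < (S.basis w).repr uk p := by
      intro p hp
      rw [hδ p]
      rcases hp with hp1 | hp2
      · have hp2 : S.g w p ∉ J₂ := fun hp2 => Set.disjoint_left.mp hdisj hp1 hp2
        have h1 := hM₁c p
        have h2 := neg_abs_le ((S.basis w).repr (S.g t k) p)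
        simp only [if_pos hp1, if_neg hp2, mul_one, mul_zero]
        omega
      · have hp1 : S.g w p ∉ J₁ := fun hp1 => Set.disjoint_left.mp hdisj hp1 hp2
        have h1 := hM₂c p
        have h2 := neg_abs_le ((S.basis w).repr (S.g t k) p)
        simp only [if_pos hp2, if_neg hp1, mul_one, mul_zero]
        omega
    set I : Finset (Fin n) := Finset.univ.filter (fun p => (S.basis v).repr uk p ≠ 0)
      with hIdef
    set I' : Finset (Fin n) := Finset.univ.filter (fun p => (S.basis w).repr uk p ≠ 0)
      with hI'def
    have e1 : ∑ p ∈ I, (S.basis v).repr uk p • S.g v p = uk := by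
      rw [hIdef, Finset.sum_filter_of_ne, S.sum_repr v uk]
      intro x _ hx h0
      exact hx (by rw [h0, zero_smul])
    have e2 : ∑ p ∈ I', (S.basis w).repr uk p • S.g w p = uk := by
      rw [hI'def, Finset.sum_filter_of_ne, S.sum_repr w uk]
      intro x _ hx h0
      exact hx (by rw [h0, zero_smul])
    obtain ⟨σ, hσ, hmatch⟩ := S.uniqueness v w I I'
      (fun p => (S.basis v).repr uk p) (fun p => (S.basis w).repr uk p)
      (fun p hp => lt_of_le_of_ne (hγ0 p) (Ne.symm (Finset.mem_filter.mp hp).2))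
      (fun p hp => lt_of_le_of_ne (hδ0 p) (Ne.symm (Finset.mem_filter.mp hp).2))
      (e1.trans e2.symm)
    have hC' : ∀ p ∈ I', S.g w p ∈ C :=
      fun p hp => ⟨⟨σ p, ((hmatch p hp).2).symm⟩, ⟨p, rfl⟩⟩
    have hJC : ∀ x ∈ J₁ ∪ J₂, x ∈ C := by
      intro x hx
      obtain ⟨p, rfl⟩ := hw.1 hx
      exact hC' p (Finset.mem_filter.mpr ⟨Finset.mem_univ p, (hδpos p hx).ne'⟩)
    have huk : uk ∈ Submodule.span ℤ C := by
      rw [← e2]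
      exact Submodule.sum_mem _ fun p hp =>
        Submodule.smul_mem _ _ (Submodule.subset_span (hC' p hp))
    have hs₁C : s₁ ∈ Submodule.span ℤ C := by
      rw [hs₁def]
      exact Submodule.sum_mem _ fun x hx => Submodule.subset_span
        (hJC x (Or.inl (hfin₁.mem_toFinset.mp hx)))
    have hs₂C : s₂ ∈ Submodule.span ℤ C := by
      rw [hs₂def]
      exact Submodule.sum_mem _ fun x hx => Submodule.subset_span
        (hJC x (Or.inr (hfin₂.mem_toFinset.mp hx)))
    have hgtk : S.g t k = uk - M₁ • s₁ - M₂ • s₂ := by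
      rw [hukdef, hvkdef]; abel
    rw [hgtk]
    exact sub_mem (sub_mem huk (Submodule.smul_mem _ _ hs₁C)) (Submodule.smul_mem _ _ hs₂C)
  have hCtop : Submodule.span ℤ C = ⊤ := by
    rw [eq_top_iff, ← S.span t, Submodule.span_le]
    rintro x ⟨k, rfl⟩
    exact main k
  have hv' : C = Set.range (S.g v) :=
    range_eq_of_span _ (S.indep v) C Set.inter_subset_left hCtop
  have hw' : C = Set.range (S.g w) :=
    range_eq_of_span _ (S.indep w) C Set.inter_subset_right hCtop
  rw [← hv', ← hw']

end GSystem

/-- Theorem 5.1.9: for a disjoint union `J = J₁ ⊔ J₂` of subsets of the initial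
basis `G_{t₀}`, co-Bongartz completions compose:
`T_{J₂}(T_{J₁}(G_t)) = T_J(G_t) = T_{J₁}(T_{J₂}(G_t))`. -/
theorem stmt5 {n : ℕ} {T : Type} {t₀ : T} (S : GSystem n T t₀) (t : T)
    (J₁ J₂ : Set (Fin n → ℤ))
    (h₁ : J₁ ⊆ Set.range (S.g t₀)) (h₂ : J₂ ⊆ Set.range (S.g t₀))
    (hdisj : Disjoint J₁ J₂)
    (t₁ t₂ t₃ t₄ t' : T)
    (ht₁ : S.IsCoB J₁ t t₁) (ht₂ : S.IsCoB J₂ t₁ t₂)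
    (ht₃ : S.IsCoB J₂ t t₃) (ht₄ : S.IsCoB J₁ t₃ t₄)
    (ht' : S.IsCoB (J₁ ∪ J₂) t t') :
    Set.range (S.g t₂) = Set.range (S.g t') ∧
    Set.range (S.g t₄) = Set.range (S.g t') := by
  refine ⟨S.key t t₁ t₂ t' J₁ J₂ h₁ h₂ hdisj ht₁ ht₂ ht', ?_⟩
  exact S.key t t₃ t₄ t' J₂ J₁ h₂ h₁ hdisj.symm ht₃ ht₄ (by rwa [Set.union_comm] at ht')
end

section
/- Let G_T be a G-system at t₀, G_t ∈ G_T, and G_{t'} = μ_{g_{n;t}}(G_t) the mutation of G_t at its n-th vector. Let J ⊆ G_{t₀}, G_u = T_J(G_t), and G_v = T_J(G_{t'}). Then G_u and G_v share at least n−1 common vectors; consequently either G_u = G_v or G_v = μ_g(G_u) for some g ∈ G_u (they differ by a single mutation). -/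
/-- Theorem 5.2.1: if `G_{t'} = μ_{g_{n;t}}(G_t)` and `G_u = T_J(G_t)`,
`G_v = T_J(G_{t'})` for some `J ⊆ G_{t₀}`, then `G_u` and `G_v` share at least
`n - 1` common vectors; consequently either `G_u = G_v` or they are related by
a single mutation. (Here the ambient rank is `n + 1`.) -/
theorem stmt7 {n : ℕ} {T : Type} {t₀ : T} (S : GSystem (n + 1) T t₀) (t t' : T)
    (hmut : S.IsMutationAt t t' (Fin.last n))
    (J : Set (Fin (n + 1) → ℤ)) (hJ : J ⊆ Set.range (S.g t₀))
    (u v : T) (hu : S.IsCoB J t u) (hv : S.IsCoB J t' v) :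
    n ≤ (Set.range (S.g u) ∩ Set.range (S.g v)).ncard ∧
    (Set.range (S.g u) = Set.range (S.g v) ∨
      ∃ k : Fin (n + 1),
        Set.range (S.g u) ∩ Set.range (S.g v) = Set.range (S.g u) \ {S.g u k}) := by
  classical
  have hgu_inj : Function.Injective (S.g u) := (S.indep u).injective
  have hgt_inj : Function.Injective (S.g t) := (S.indep t).injective
  have hJu : J ⊆ Set.range (S.g u) := hu.1
  have hJv : J ⊆ Set.range (S.g v) := hv.1
  -- bases
  let Bu : Module.Basis (Fin (n+1)) ℤ (Fin (n+1) → ℤ) := Module.Basis.mk (S.indep u) (S.span u).ge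
  let Bv : Module.Basis (Fin (n+1)) ℤ (Fin (n+1) → ℤ) := Module.Basis.mk (S.indep v) (S.span v).ge
  have hrepr_u : ∀ x : Fin (n+1) → ℤ, x = ∑ i, Bu.repr x i • S.g u i := by
    intro x
    conv_lhs => rw [← Bu.sum_repr x]
    refine Finset.sum_congr rfl fun i _ => ?_
    rw [Module.Basis.mk_apply]
  have hrepr_v : ∀ x : Fin (n+1) → ℤ, x = ∑ i, Bv.repr x i • S.g v i := by
    intro x
    conv_lhs => rw [← Bv.sum_repr x]
    refine Finset.sum_congr rfl fun i _ => ?_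
    rw [Module.Basis.mk_apply]
  -- common vectors of G_t and G_{t'}
  have hcommon : ∀ k : Fin (n+1), k ≠ Fin.last n → S.g t k ∈ Set.range (S.g t') := by
    intro k hk
    have h1 : S.g t k ∈ Set.range (S.g t) \ {S.g t (Fin.last n)} := by
      refine ⟨⟨k, rfl⟩, ?_⟩
      simp only [Set.mem_singleton_iff]
      exact fun h => hk (hgt_inj h)
    rw [GSystem.IsMutationAt] at hmut
    rw [← hmut] at h1
    exact h1.2
  -- Key lemma: every u-basis vector appearing in the expansion of a common vector
  -- of G_t and G_{t'} lies in the range of g_v.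
  have key : ∀ k : Fin (n+1), k ≠ Fin.last n →
      ∀ i : Fin (n+1), Bu.repr (S.g t k) i ≠ 0 → S.g u i ∈ Set.range (S.g v) := by
    intro k hk
    obtain ⟨k', hk'⟩ := hcommon k hk
    set x : Fin (n+1) → ℤ := S.g t k with hxdef
    have r : Fin (n+1) → ℤ := fun i => Bu.repr x i
    set r : Fin (n+1) → ℤ := fun i => Bu.repr x i with hrdef
    set r' : Fin (n+1) → ℤ := fun j => Bv.repr x j with hr'def
    have hr : x = ∑ i, r i • S.g u i := hrepr_u x
    have hr' : x = ∑ j, r' j • S.g v j := hrepr_v x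
    have hru : ∀ i, S.g u i ∉ J → 0 ≤ r i := hu.2 k r hr
    have hrv : ∀ j, S.g v j ∉ J → 0 ≤ r' j := hv.2 k' r' (by rw [hk']; exact hr')
    -- choose representative indices in the other basis for negative-coefficient (J) vectors
    have hch : ∀ j : Fin (n+1), ∃ i, r' j < 0 → S.g u i = S.g v j := by
      intro j
      by_cases hj : r' j < 0
      · have hmem : S.g v j ∈ J := by
          by_contra h
          exact absurd (hrv j h) (not_le.mpr hj)
        obtain ⟨i, hi⟩ := hJu hmem
        exact ⟨i, fun _ => hi⟩
      · exact ⟨0, fun h => absurd h hj⟩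
    choose π hπ using hch
    have hch' : ∀ i : Fin (n+1), ∃ j, r i < 0 → S.g v j = S.g u i := by
      intro i
      by_cases hi : r i < 0
      · have hmem : S.g u i ∈ J := by
          by_contra h
          exact absurd (hru i h) (not_le.mpr hi)
        obtain ⟨j, hj⟩ := hJv hmem
        exact ⟨j, fun _ => hj⟩
      · exact ⟨0, fun h => absurd h hi⟩
    choose τ hτ using hch'
    set a : Fin (n+1) → ℤ :=
      fun i => max (r i) 0 + ∑ j, (if r' j < 0 ∧ π j = i then -r' j else 0) with ha
    set b : Fin (n+1) → ℤ :=
      fun j => max (r' j) 0 + ∑ i, (if r i < 0 ∧ τ i = j then -r i else 0) with hb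
    have ha_nonneg : ∀ i, 0 ≤ a i := by
      intro i
      refine add_nonneg (le_max_right _ _) (Finset.sum_nonneg fun j _ => ?_)
      split
      · rename_i h; linarith [h.1]
      · exact le_refl 0
    have hb_nonneg : ∀ j, 0 ≤ b j := by
      intro j
      refine add_nonneg (le_max_right _ _) (Finset.sum_nonneg fun i _ => ?_)
      split
      · rename_i h; linarith [h.1]
      · exact le_refl 0
    have hsum_a : ∑ i, a i • S.g u i
        = (∑ i, max (r i) 0 • S.g u i) + ∑ j, (if r' j < 0 then (-r' j) • S.g v j else 0) := by
      simp only [ha, add_smul, Finset.sum_add_distrib, Finset.sum_smul]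
      congr 1
      rw [Finset.sum_comm]
      refine Finset.sum_congr rfl fun j _ => ?_
      by_cases hj : r' j < 0
      · simp only [hj, true_and, if_pos]
        rw [← hπ j hj]
        simp only [ite_smul, zero_smul]
        rw [Finset.sum_ite_eq]
        simp
      · simp [hj]
    have hsum_b : ∑ j, b j • S.g v j
        = (∑ j, max (r' j) 0 • S.g v j) + ∑ i, (if r i < 0 then (-r i) • S.g u i else 0) := by
      simp only [hb, add_smul, Finset.sum_add_distrib, Finset.sum_smul]
      congr 1
      rw [Finset.sum_comm]
      refine Finset.sum_congr rfl fun i _ => ?_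
      by_cases hi : r i < 0
      · simp only [hi, true_and, if_pos]
        rw [← hτ i hi]
        simp only [ite_smul, zero_smul]
        rw [Finset.sum_ite_eq]
        simp
      · simp [hi]
    have hAu : (∑ i, max (r i) 0 • S.g u i) - (∑ i, (if r i < 0 then (-r i) • S.g u i else 0)) = x := by
      rw [← Finset.sum_sub_distrib]
      rw [hr]
      refine Finset.sum_congr rfl fun i _ => ?_
      by_cases hi : r i < 0
      · rw [if_pos hi, max_eq_right hi.le, ← sub_smul]
        ring_nf
      · rw [if_neg hi, max_eq_left (not_lt.mp hi), sub_zero]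
    have hAv : (∑ j, max (r' j) 0 • S.g v j) - (∑ j, (if r' j < 0 then (-r' j) • S.g v j else 0)) = x := by
      rw [← Finset.sum_sub_distrib]
      rw [hr']
      refine Finset.sum_congr rfl fun j _ => ?_
      by_cases hj : r' j < 0
      · rw [if_pos hj, max_eq_right hj.le, ← sub_smul]
        ring_nf
      · rw [if_neg hj, max_eq_left (not_lt.mp hj), sub_zero]
    have heq : ∑ i, a i • S.g u i = ∑ j, b j • S.g v j := by
      rw [hsum_a, hsum_b]
      have h1 := eq_add_of_sub_eq hAu
      have h2 := eq_add_of_sub_eq hAv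
      rw [h1, h2]
      abel
    set I : Finset (Fin (n+1)) := Finset.univ.filter (fun i => 0 < a i) with hI
    set I' : Finset (Fin (n+1)) := Finset.univ.filter (fun j => 0 < b j) with hI'
    have hsumI : ∑ i ∈ I, a i • S.g u i = ∑ i, a i • S.g u i := by
      refine Finset.sum_subset (Finset.subset_univ _) fun i _ hi => ?_
      have h0 : a i = 0 := le_antisymm (not_lt.mp (by simpa [hI] using hi)) (ha_nonneg i)
      simp [h0]
    have hsumI' : ∑ j ∈ I', b j • S.g v j = ∑ j, b j • S.g v j := by
      refine Finset.sum_subset (Finset.subset_univ _) fun j _ hj => ?_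
      have h0 : b j = 0 := le_antisymm (not_lt.mp (by simpa [hI'] using hj)) (hb_nonneg j)
      simp [h0]
    obtain ⟨σ, hσbij, hσ⟩ := S.uniqueness u v I I' a b
      (fun i hi => (Finset.mem_filter.mp hi).2) (fun j hj => (Finset.mem_filter.mp hj).2)
      (by rw [hsumI, hsumI', heq])
    intro i hri0
    by_cases hiJ : S.g u i ∈ J
    · exact hJv hiJ
    · have hpos : 0 < r i := lt_of_le_of_ne (hru i hiJ) (Ne.symm hri0)
      have hapos : 0 < a i := by
        have h1 : r i ≤ a i := by
          rw [ha]
          have : max (r i) 0 = r i := max_eq_left hpos.le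
          simp only
          rw [this]
          refine le_add_of_nonneg_right (Finset.sum_nonneg fun j _ => ?_)
          split
          · rename_i h; linarith [h.1]
          · exact le_refl 0
        exact lt_of_lt_of_le hpos h1
      have hiI : i ∈ I := Finset.mem_filter.mpr ⟨Finset.mem_univ _, hapos⟩
      obtain ⟨j, hjI', hji⟩ := hσbij.surjOn hiI
      refine ⟨j, ?_⟩
      rw [(hσ j hjI').2, hji]
  -- the set of u-indices with common vectors
  set Good : Finset (Fin (n+1)) :=
    Finset.univ.filter (fun i => S.g u i ∈ Set.range (S.g v)) with hGooddef
  have hGood : n ≤ Good.card := by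
    set W : Submodule ℤ (Fin (n+1) → ℤ) :=
      Submodule.span ℤ (Set.range (fun i : Good => S.g u i)) with hWdef
    haveI : Module.Finite ℤ W := Module.Finite.span_of_finite ℤ (Set.finite_range _)
    have li : LinearIndependent ℤ (fun i : Good => S.g u i) :=
      (S.indep u).comp Subtype.val Subtype.val_injective
    let BW : Module.Basis Good ℤ W := Module.Basis.span li
    have hfr : Module.finrank ℤ W = Good.card := by
      rw [Module.finrank_eq_card_basis BW, Fintype.card_coe]
    have hspanmem : ∀ k : Fin (n+1), k ≠ Fin.last n → S.g t k ∈ W := by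
      intro k hk
      have hx : S.g t k = ∑ i ∈ Good, Bu.repr (S.g t k) i • S.g u i := by
        conv_lhs => rw [hrepr_u (S.g t k)]
        symm
        refine Finset.sum_subset (Finset.subset_univ _) fun i _ hi => ?_
        have h0 : Bu.repr (S.g t k) i = 0 := by
          by_contra h
          exact hi (Finset.mem_filter.mpr ⟨Finset.mem_univ _, key k hk i h⟩)
        simp [h0]
      rw [hx]
      exact Submodule.sum_mem _ fun i hi =>
        Submodule.smul_mem _ _ (Submodule.subset_span ⟨⟨i, hi⟩, rfl⟩)
    have hy : LinearIndependent ℤ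
        (fun k : {k : Fin (n+1) // k ≠ Fin.last n} => (⟨S.g t k, hspanmem k k.2⟩ : W)) := by
      apply LinearIndependent.of_comp W.subtype
      exact (S.indep t).comp Subtype.val Subtype.val_injective
    have hcard := hy.fintype_card_le_finrank
    rw [hfr] at hcard
    have hcard2 : Fintype.card {k : Fin (n+1) // k ≠ Fin.last n} = n := by
      simp [Fintype.card_subtype_compl, Fintype.card_subtype_eq]
    rw [hcard2] at hcard
    exact hcard
  -- counting
  have hA_fin : (Set.range (S.g u)).Finite := Set.finite_range _
  have hB_fin : (Set.range (S.g v)).Finite := Set.finite_range _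
  have hAcard : (Set.range (S.g u)).ncard = n + 1 := by
    rw [← Set.image_univ, Set.ncard_image_of_injective _ hgu_inj, Set.ncard_univ,
      Nat.card_eq_fintype_card, Fintype.card_fin]
  have hBcard : (Set.range (S.g v)).ncard = n + 1 := by
    rw [← Set.image_univ, Set.ncard_image_of_injective _ (S.indep v).injective, Set.ncard_univ,
      Nat.card_eq_fintype_card, Fintype.card_fin]
  have himg : (S.g u) '' ↑Good ⊆ Set.range (S.g u) ∩ Set.range (S.g v) := by
    rintro z ⟨i, hi, rfl⟩
    exact ⟨⟨i, rfl⟩, (Finset.mem_filter.mp hi).2⟩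
  have hinter_fin : (Set.range (S.g u) ∩ Set.range (S.g v)).Finite :=
    hA_fin.subset Set.inter_subset_left
  have hn_le : n ≤ (Set.range (S.g u) ∩ Set.range (S.g v)).ncard := by
    calc n ≤ Good.card := hGood
    _ = ((S.g u) '' ↑Good).ncard := by
        rw [Set.ncard_image_of_injective _ hgu_inj, Set.ncard_coe_finset]
    _ ≤ _ := Set.ncard_le_ncard himg hinter_fin
  refine ⟨hn_le, ?_⟩
  by_cases hsub : Set.range (S.g u) ⊆ Set.range (S.g v)
  · left
    exact Set.eq_of_subset_of_ncard_le hsub (by rw [hAcard, hBcard]) hB_fin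
  · right
    obtain ⟨z, hzA, hzB⟩ := Set.not_subset.mp hsub
    obtain ⟨k, rfl⟩ := hzA
    refine ⟨k, ?_⟩
    have h1 : Set.range (S.g u) ∩ Set.range (S.g v) ⊆ Set.range (S.g u) \ {S.g u k} := by
      rintro z ⟨hz1, hz2⟩
      refine ⟨hz1, fun h => hzB ?_⟩
      rw [Set.mem_singleton_iff] at h
      rw [← h]
      exact hz2
    have hdiff_fin : (Set.range (S.g u) \ {S.g u k}).Finite := hA_fin.diff
    have hdiff : (Set.range (S.g u) \ {S.g u k}).ncard = n := by
      rw [Set.ncard_diff_singleton_of_mem (Set.mem_range_self k), hAcard]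
      omega
    exact Set.eq_of_subset_of_ncard_le h1 (by rw [hdiff]; exact hn_le) hdiff_fin
end

section
/- Let D be a K-linear, Krull–Schmidt, Hom-finite triangulated category with a silting object S. Then the subcategory S ∗ S[1] is closed under extensions: if X → Y → Z → X[1] is a triangle with X, Z ∈ S ∗ S[1], then Y ∈ S ∗ S[1]. -/
open CategoryTheory Category Limits Pretriangulated

variable {C : Type*} [Category C] [Preadditive C] [HasZeroObject C]
  [HasShift C ℤ] [∀ k : ℤ, (CategoryTheory.shiftFunctor C k).Additive]
  [Pretriangulated C] [HasFiniteBiproducts C]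

/-- `X ∈ add S`: `X` is a direct summand of a finite direct sum of copies of `S`. -/
def memAdd (S X : C) : Prop :=
  ∃ (m : ℕ) (i : X ⟶ ⨁ fun _ : Fin m => S) (r : (⨁ fun _ : Fin m => S) ⟶ X),
    i ≫ r = 𝟙 X

/-- `Y ∈ S ∗ S[1]`: there is a distinguished triangle `X' → Y → Y' → X'[1]`
with `X' ∈ add S` and `Y' ∈ add (S[1])`. -/
def memStar (S Y : C) : Prop :=
  ∃ (X' Y' : C) (f : X' ⟶ Y) (g : Y ⟶ Y') (h : Y' ⟶ X'⟦(1 : ℤ)⟧),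
    memAdd S X' ∧ memAdd (S⟦(1 : ℤ)⟧) Y' ∧ Triangle.mk f g h ∈ distTriang C

/-- `S` is presilting: `Hom(S, S[i]) = 0` for all `i > 0`. -/
def IsPresilting (S : C) : Prop :=
  ∀ i : ℤ, 0 < i → ∀ f : S ⟶ S⟦i⟧, f = 0

/-- `thick(S) = D`: every property of objects closed under isomorphism, shifts,
extensions (cones) and direct summands which holds for `S` holds everywhere. -/
def ThickGenerates (S : C) : Prop :=
  ∀ P : C → Prop,
    (∀ X Y : C, (X ≅ Y) → P X → P Y) →
    (∀ (X : C) (k : ℤ), P X → P (X⟦k⟧)) →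
    (∀ T : Triangle C, (T ∈ distTriang C) → P T.obj₁ → P T.obj₃ → P T.obj₂) →
    (∀ (X Y : C) (i : X ⟶ Y) (r : Y ⟶ X), i ≫ r = 𝟙 X → P Y → P X) →
    P S → ∀ X : C, P X

/-- `S` is silting: presilting and `thick(S) = D`. -/
def IsSilting (S : C) : Prop := IsPresilting S ∧ ThickGenerates S

section MyAux

set_option linter.unusedSectionVars false

attribute [local instance] hasBinaryBiproducts_of_finite_biproducts

lemma my_memAdd_of_retract {S B A : C} (hB : memAdd S B) (i : A ⟶ B) (r : B ⟶ A)
    (hir : i ≫ r = 𝟙 A) : memAdd S A := by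
  obtain ⟨m, iB, rB, hB⟩ := hB
  refine ⟨m, i ≫ iB, rB ≫ r, ?_⟩
  rw [assoc, ← assoc iB, hB, id_comp, hir]

lemma my_memAdd_ofIso {S T A : C} (e : S ≅ T) (h : memAdd S A) : memAdd T A := by
  obtain ⟨m, i, r, hir⟩ := h
  refine ⟨m, i ≫ biproduct.map (fun _ => e.hom), biproduct.map (fun _ => e.inv) ≫ r, ?_⟩
  have : (biproduct.map (fun (_ : Fin m) => e.hom)) ≫ (biproduct.map (fun _ => e.inv)) =
      𝟙 (⨁ fun _ : Fin m => S) := by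
    apply biproduct.hom_ext
    intro j
    simp
  rw [assoc, ← assoc (biproduct.map _), this, id_comp, hir]

lemma my_memAdd_shift {S A : C} (k : ℤ) (h : memAdd S A) :
    memAdd (S⟦k⟧) (A⟦k⟧) := by
  obtain ⟨m, i, r, hir⟩ := h
  let F := shiftFunctor C k
  refine ⟨m, F.map i ≫ (F.mapBiproduct (fun _ : Fin m => S)).hom,
    (F.mapBiproduct (fun _ : Fin m => S)).inv ≫ F.map r, ?_⟩
  rw [assoc, Iso.hom_inv_id_assoc, ← F.map_comp, hir]
  exact F.map_id A

lemma my_hom_eq_zero {S T A B : C} (hA : memAdd S A) (hB : memAdd T B)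
    (hST : ∀ φ : S ⟶ T, φ = 0) (φ : A ⟶ B) : φ = 0 := by
  obtain ⟨m, iA, rA, hA⟩ := hA
  obtain ⟨n, iB, rB, hB⟩ := hB
  have hmid : rA ≫ φ ≫ iB = 0 := by
    apply biproduct.hom_ext'
    intro j
    apply biproduct.hom_ext
    intro k
    simp only [comp_zero, zero_comp, assoc]
    exact hST _
  calc φ = (iA ≫ rA) ≫ φ ≫ (iB ≫ rB) := by rw [hA, hB, id_comp, comp_id]
    _ = iA ≫ (rA ≫ φ ≫ iB) ≫ rB := by simp [assoc]
    _ = 0 := by rw [hmid, zero_comp, comp_zero]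

lemma my_presilting_vanish {S : C} (hp : IsPresilting S) (i j : ℤ) (hij : i < j)
    (φ : S⟦i⟧ ⟶ S⟦j⟧) : φ = 0 := by
  have hiz : i + (-i) = 0 := by omega
  have hjz : j + (-i) = j - i := by omega
  let isoA : (S⟦i⟧)⟦-i⟧ ≅ S := (shiftFunctorCompIsoId C i (-i) hiz).app S
  let isoB : (S⟦j⟧)⟦-i⟧ ≅ S⟦j - i⟧ := ((shiftFunctorAdd' C j (-i) (j - i) hjz).app S).symm
  have hψ : isoA.inv ≫ (shiftFunctor C (-i)).map φ ≫ isoB.hom = 0 :=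
    hp (j - i) (by omega) _
  have : (shiftFunctor C (-i)).map φ = 0 := by
    have := congrArg (fun ξ => isoA.hom ≫ ξ ≫ isoB.inv) hψ
    simpa using this
  exact (shiftFunctor C (-i)).map_injective (by rw [this, Functor.map_zero])

lemma my_memAdd_biprod {S A B : C} (hA : memAdd S A) (hB : memAdd S B) :
    memAdd S (A ⊞ B) := by
  obtain ⟨m, iA, rA, hA⟩ := hA
  obtain ⟨n, iB, rB, hB⟩ := hB
  let u : (⨁ fun _ : Fin m => S) ⟶ ⨁ fun _ : Fin (m + n) => S :=
    biproduct.desc fun j => biproduct.ι (fun _ : Fin (m + n) => S) (Fin.castAdd n j)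
  let u' : (⨁ fun _ : Fin (m + n) => S) ⟶ ⨁ fun _ : Fin m => S :=
    biproduct.lift fun j => biproduct.π (fun _ : Fin (m + n) => S) (Fin.castAdd n j)
  let v : (⨁ fun _ : Fin n => S) ⟶ ⨁ fun _ : Fin (m + n) => S :=
    biproduct.desc fun j => biproduct.ι (fun _ : Fin (m + n) => S) (Fin.natAdd m j)
  let v' : (⨁ fun _ : Fin (m + n) => S) ⟶ ⨁ fun _ : Fin n => S :=
    biproduct.lift fun j => biproduct.π (fun _ : Fin (m + n) => S) (Fin.natAdd m j)
  have huu' : u ≫ u' = 𝟙 _ := by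
    apply biproduct.hom_ext'; intro j
    apply biproduct.hom_ext; intro k
    by_cases hjk : j = k
    · subst hjk; simp [u, u', biproduct.ι_π]
    · have : Fin.castAdd n j ≠ Fin.castAdd n k := by
        simp [Fin.ext_iff] at hjk ⊢; omega
      simp [u, u', biproduct.ι_π, this, hjk]
  have hvv' : v ≫ v' = 𝟙 _ := by
    apply biproduct.hom_ext'; intro j
    apply biproduct.hom_ext; intro k
    by_cases hjk : j = k
    · subst hjk; simp [v, v', biproduct.ι_π]
    · have : Fin.natAdd m j ≠ Fin.natAdd m k := by
        simp [Fin.ext_iff] at hjk ⊢; omega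
      simp [v, v', biproduct.ι_π, this, hjk]
  have huv' : u ≫ v' = 0 := by
    apply biproduct.hom_ext'; intro j
    apply biproduct.hom_ext; intro k
    have : Fin.castAdd n j ≠ Fin.natAdd m k := by
      simp [Fin.ext_iff]; omega
    simp [u, v', biproduct.ι_π, this]
  have hvu' : v ≫ u' = 0 := by
    apply biproduct.hom_ext'; intro j
    apply biproduct.hom_ext; intro k
    have : Fin.natAdd m j ≠ Fin.castAdd n k := by
      simp [Fin.ext_iff]; omega
    simp [v, u', biproduct.ι_π, this]
  refine ⟨m + n, biprod.desc (iA ≫ u) (iB ≫ v), biprod.lift (u' ≫ rA) (v' ≫ rB), ?_⟩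
  apply biprod.hom_ext' <;> apply biprod.hom_ext <;>
    simp only [biprod.inl_desc_assoc, biprod.inr_desc_assoc, assoc, biprod.lift_fst,
      biprod.lift_snd, comp_id, biprod.inl_fst, biprod.inr_snd, biprod.inl_snd, biprod.inr_fst]
  · rw [← assoc u, huu', id_comp, hA]
  · rw [← assoc u, huv', zero_comp, comp_zero]
  · rw [← assoc v, hvu', zero_comp, comp_zero]
  · rw [← assoc v, hvv', id_comp, hB]

end MyAux

/-- Corollary 3.3.3: for a silting object `S` of a K-linear, Hom-finite
triangulated category `D`, the subcategory `S ∗ S[1]` is closed under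
extensions: if `X → Y → Z → X[1]` is a distinguished triangle with
`X, Z ∈ S ∗ S[1]`, then `Y ∈ S ∗ S[1]`. -/
theorem stmt9 (K : Type*) [Field K] [Linear K C]
    (homFinite : ∀ X Y : C, FiniteDimensional K (X ⟶ Y))
    (S : C) (hS : IsSilting S)
    (X Y Z : C) (f : X ⟶ Y) (g : Y ⟶ Z) (h : Z ⟶ X⟦(1 : ℤ)⟧)
    (hT : Triangle.mk f g h ∈ distTriang C)
    (hX : memStar S X) (hZ : memStar S Z) :
    memStar S Y := by
  haveI : HasBinaryBiproducts C := hasBinaryBiproducts_of_finite_biproducts C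
  obtain ⟨hP, -⟩ := hS
  obtain ⟨X', X'', a, b, c, haX', haX'', hTX⟩ := hX
  obtain ⟨Z', Z'', p, q, r, haZ', haZ'', hTZ⟩ := hZ
  -- basic Hom-vanishing coming from presilting
  have v1 : ∀ φ : S ⟶ S⟦(1:ℤ)⟧, φ = 0 := hP 1 one_pos
  have v2 : ∀ φ : S ⟶ S⟦(2:ℤ)⟧, φ = 0 := hP 2 two_pos
  have vm11 : ∀ φ : (S⟦(-1:ℤ)⟧) ⟶ S⟦(1:ℤ)⟧, φ = 0 :=
    my_presilting_vanish hP (-1) 1 (by omega)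
  -- membership in various `add` classes
  have mX'1 : memAdd (S⟦(1:ℤ)⟧) (X'⟦(1:ℤ)⟧) := my_memAdd_shift 1 haX'
  have mX''1 : memAdd (S⟦(2:ℤ)⟧) (X''⟦(1:ℤ)⟧) :=
    my_memAdd_ofIso (((shiftFunctorAdd' C 1 1 2 (by norm_num)).app S).symm)
      (my_memAdd_shift 1 haX'')
  have mZ'm1 : memAdd (S⟦(-1:ℤ)⟧) (Z'⟦(-1:ℤ)⟧) := my_memAdd_shift (-1) haZ'
  have mZ''m1 : memAdd S (Z''⟦(-1:ℤ)⟧) :=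
    my_memAdd_ofIso ((shiftFunctorCompIsoId C 1 (-1) (by norm_num)).app S)
      (my_memAdd_shift (-1) haZ'')
  have vZ'X'' : ∀ φ : Z' ⟶ X'', φ = 0 := my_hom_eq_zero haZ' haX'' v1
  -- Hom(Z⟦-1⟧, X'') = 0
  have hZm1X'' : ∀ φ : (Z⟦(-1:ℤ)⟧) ⟶ X'', φ = 0 := by
    intro φ
    have hT3 : (Triangle.mk p q r).invRotate.invRotate.invRotate ∈ distTriang C :=
      inv_rot_of_distTriang _ (inv_rot_of_distTriang _ (inv_rot_of_distTriang _ hTZ))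
    obtain ⟨ξ, hξ⟩ := Triangle.yoneda_exact₂ _ hT3 φ (my_hom_eq_zero mZ'm1 haX'' vm11 _)
    rw [hξ, my_hom_eq_zero mZ''m1 haX'' v1 ξ]; exact comp_zero
  -- p ≫ h = 0
  have hph : p ≫ h = 0 := by
    have hT4 : (Triangle.mk a b c).rotate.rotate.rotate ∈ distTriang C :=
      rot_of_distTriang _ (rot_of_distTriang _ (rot_of_distTriang _ hTX))
    obtain ⟨ζ, hζ⟩ := Triangle.coyoneda_exact₂ _ hT4 (p ≫ h)
      (my_hom_eq_zero haZ' mX''1 v2 _)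
    exact hζ.trans (by rw [my_hom_eq_zero haZ' mX'1 v1 ζ]; exact zero_comp)
  -- lift p through g
  have hsex : ∃ s : Z' ⟶ Y, p = s ≫ g := by
    obtain ⟨s₀, hs₀⟩ := Triangle.coyoneda_exact₃ (Triangle.mk f g h) hT p hph
    exact ⟨s₀, hs₀⟩
  obtain ⟨s, hs⟩ := hsex
  -- extend b along f
  have htex : ∃ t : Y ⟶ X'', b = f ≫ t := by
    obtain ⟨t₀, ht₀⟩ := Triangle.yoneda_exact₂ (Triangle.mk f g h).invRotate
      (inv_rot_of_distTriang _ hT) b (hZm1X'' _)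
    exact ⟨t₀, ht₀⟩
  obtain ⟨t, ht⟩ := htex
  -- the cone construction
  let α : X' ⊞ Z' ⟶ Y := biprod.desc (a ≫ f) s
  obtain ⟨Co, β, γ, hTα⟩ := distinguished_cocone_triangle α
  have hαβ : α ≫ β = 0 := comp_distTriang_mor_zero₁₂ _ hTα
  have hfg : f ≫ g = 0 := comp_distTriang_mor_zero₁₂ _ hT
  have hab : a ≫ b = 0 := comp_distTriang_mor_zero₁₂ _ hTX
  have hpq : p ≫ q = 0 := comp_distTriang_mor_zero₁₂ _ hTZ
  have hafβ : a ≫ f ≫ β = 0 := by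
    have h1 : biprod.inl ≫ α = a ≫ f := biprod.inl_desc _ _
    calc a ≫ f ≫ β = (biprod.inl ≫ α) ≫ β := by rw [h1, assoc]
      _ = biprod.inl ≫ α ≫ β := by rw [assoc]
      _ = 0 := by rw [hαβ, comp_zero]
  have hsβ : s ≫ β = 0 := by
    have h1 : biprod.inr ≫ α = s := biprod.inr_desc _ _
    calc s ≫ β = (biprod.inr ≫ α) ≫ β := by rw [h1]
      _ = 0 := by rw [assoc, hαβ, comp_zero]
  have heex : ∃ e : X'' ⟶ Co, f ≫ β = b ≫ e := by
    obtain ⟨e₀, he₀⟩ := Triangle.yoneda_exact₂ (Triangle.mk a b c) hTX (f ≫ β) hafβ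
    exact ⟨e₀, he₀⟩
  obtain ⟨e, he⟩ := heex
  have hfε : f ≫ (β - t ≫ e) = 0 := by
    rw [Preadditive.comp_sub, he, ← assoc, ← ht, sub_self]
  have hεex : ∃ ε' : Z ⟶ Co, β - t ≫ e = g ≫ ε' := by
    obtain ⟨ε'₀, hε'₀⟩ := Triangle.yoneda_exact₂ (Triangle.mk f g h) hT (β - t ≫ e) hfε
    exact ⟨ε'₀, hε'₀⟩
  obtain ⟨ε', hε'⟩ := hεex
  have hpε' : p ≫ ε' = 0 := by
    have h1 : s ≫ (β - t ≫ e) = 0 := by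
      rw [Preadditive.comp_sub, hsβ, ← assoc, vZ'X'' (s ≫ t), zero_comp, sub_zero]
    calc p ≫ ε' = (s ≫ g) ≫ ε' := by rw [← hs]
      _ = s ≫ (β - t ≫ e) := by rw [assoc, ← hε']
      _ = 0 := h1
  have hχex : ∃ χ₂ : Z'' ⟶ Co, ε' = q ≫ χ₂ := by
    obtain ⟨χ₂₀, hχ₂₀⟩ := Triangle.yoneda_exact₂ (Triangle.mk p q r) hTZ ε' hpε'
    exact ⟨χ₂₀, hχ₂₀⟩
  obtain ⟨χ₂, hχ₂⟩ := hχex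
  let ψ : Y ⟶ X'' ⊞ Z'' := biprod.lift t (g ≫ q)
  have hαψ : α ≫ ψ = 0 := by
    apply biprod.hom_ext'
    · apply biprod.hom_ext
      · simp only [ψ, α, biprod.inl_desc_assoc, assoc, biprod.lift_fst, zero_comp, comp_zero]
        rw [← ht]
        exact hab
      · simp only [ψ, α, biprod.inl_desc_assoc, assoc, biprod.lift_snd, zero_comp, comp_zero]
        rw [← assoc f g, hfg, zero_comp, comp_zero]
    · apply biprod.hom_ext
      · simp only [ψ, α, biprod.inr_desc_assoc, assoc, biprod.lift_fst, zero_comp, comp_zero]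
        exact vZ'X'' _
      · simp only [ψ, α, biprod.inr_desc_assoc, assoc, biprod.lift_snd, zero_comp, comp_zero]
        rw [← assoc, ← hs]
        exact hpq
  have hwex : ∃ w : Co ⟶ X'' ⊞ Z'', ψ = β ≫ w := by
    obtain ⟨w₀, hw₀⟩ := Triangle.yoneda_exact₂ (Triangle.mk α β γ) hTα ψ hαψ
    exact ⟨w₀, hw₀⟩
  obtain ⟨w, hw⟩ := hwex
  let χ : X'' ⊞ Z'' ⟶ Co := biprod.desc e χ₂
  have hψχ : ψ ≫ χ = β := by
    have h1 : ψ ≫ χ = t ≫ e + (g ≫ q) ≫ χ₂ := biprod.lift_desc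
    rw [h1, assoc, ← hχ₂, ← hε']
    abel
  have hβθ : β ≫ (𝟙 Co - w ≫ χ) = 0 := by
    rw [Preadditive.comp_sub, comp_id, ← assoc, ← hw, hψχ, sub_self]
  have hρex : ∃ ρ : (X' ⊞ Z')⟦(1:ℤ)⟧ ⟶ Co, 𝟙 Co - w ≫ χ = γ ≫ ρ := by
    obtain ⟨ρ₀, hρ₀⟩ := Triangle.yoneda_exact₃ (Triangle.mk α β γ) hTα (𝟙 Co - w ≫ χ) hβθ
    exact ⟨ρ₀, hρ₀⟩
  obtain ⟨ρ, hρ⟩ := hρex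
  have hretr : biprod.lift w γ ≫ biprod.desc χ ρ = 𝟙 Co := by
    rw [biprod.lift_desc, ← hρ]
    abel
  have hCo : memAdd (S⟦(1:ℤ)⟧) Co :=
    my_memAdd_of_retract
      (my_memAdd_biprod (my_memAdd_biprod haX'' haZ'')
        (my_memAdd_shift 1 (my_memAdd_biprod haX' haZ'))) _ _ hretr
  exact ⟨X' ⊞ Z', Co, α, β, γ, my_memAdd_biprod haX' haZ', hCo, hTα⟩
end

section
/- Let D be a K-linear, Krull–Schmidt, Hom-finite triangulated category with a basic silting object S, and let U be a presilting object lying in S ∗ S[1]. Form the triangle U[−1] → S'' → S' → U where S' → U is a right minimal add(S)-approximation of U. Then S'' ∈ add(S). -/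
open CategoryTheory Category Limits Pretriangulated

variable {C : Type*} [Category C] [Preadditive C] [HasZeroObject C]
  [HasShift C ℤ] [∀ k : ℤ, (CategoryTheory.shiftFunctor C k).Additive]
  [Pretriangulated C] [HasFiniteBiproducts C]

section Aux
set_option linter.unusedSectionVars false

lemma memAdd_of_retract {T X Y : C} (i : X ⟶ Y) (r : Y ⟶ X) (hir : i ≫ r = 𝟙 X)
    (hY : memAdd T Y) : memAdd T X := by
  obtain ⟨m, i', r', h⟩ := hY
  refine ⟨m, i ≫ i', r' ≫ r, ?_⟩
  rw [assoc, reassoc_of% h, hir]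

lemma memAdd_of_iso {T X Y : C} (e : X ≅ Y) (hY : memAdd T Y) : memAdd T X :=
  memAdd_of_retract e.hom e.inv e.hom_inv_id hY

lemma memAdd_congr_left {T T' X : C} (e : T ≅ T') (hX : memAdd T X) : memAdd T' X := by
  obtain ⟨m, i, r, h⟩ := hX
  exact ⟨m, i ≫ (biproduct.mapIso (fun _ : Fin m => e)).hom,
    (biproduct.mapIso (fun _ : Fin m => e)).inv ≫ r, by
      rw [assoc, Iso.hom_inv_id_assoc, h]⟩

lemma memAdd_shift {T Z : C} (k : ℤ) (hZ : memAdd T Z) : memAdd (T⟦k⟧) (Z⟦k⟧) := by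
  obtain ⟨m, i, r, h⟩ := hZ
  let F := shiftFunctor C k
  let e : F.obj (⨁ fun _ : Fin m => T) ≅ ⨁ fun _ : Fin m => T⟦k⟧ :=
    F.mapBiproduct _
  refine ⟨m, F.map i ≫ e.hom, e.inv ≫ F.map r, ?_⟩
  rw [assoc, Iso.hom_inv_id_assoc, ← Functor.map_comp, h, CategoryTheory.Functor.map_id]

lemma hom_eq_zero_of_memAdd {T W Y' : C} (hpre : IsPresilting T)
    (hW : memAdd T W) (hY : memAdd (T⟦(1 : ℤ)⟧) Y') (φ : W ⟶ Y') : φ = 0 := by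
  obtain ⟨m, i, r, hir⟩ := hW
  obtain ⟨n, i', r', hir'⟩ := hY
  have hmid : r ≫ φ ≫ i' = 0 := by
    apply biproduct.hom_ext
    intro j
    apply biproduct.hom_ext'
    intro l
    rw [zero_comp, comp_zero]
    exact hpre 1 one_pos _
  calc φ = (i ≫ r) ≫ φ ≫ (i' ≫ r') := by rw [hir, hir', id_comp, comp_id]
    _ = i ≫ (r ≫ φ ≫ i') ≫ r' := by simp only [assoc]
    _ = 0 := by rw [hmid, zero_comp, comp_zero]

end Aux

/-- Proposition 3.4.2: let `S` be a basic silting object of a K-linear,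
Krull–Schmidt, Hom-finite triangulated category `D` and let `U` be a presilting
(rigid) object lying in `S ∗ S[1]`.  If `S'' → S' → U → S''[1]` is a
distinguished triangle in which `f : S' → U` is a right minimal
`add S`-approximation of `U`, then `S'' ∈ add S`. -/
theorem stmt10 (K : Type*) [Field K] [Linear K C]
    (homFinite : ∀ X Y : C, FiniteDimensional K (X ⟶ Y))
    (S : C) (hS : IsSilting S)
    (U : C) (hU : IsPresilting U) (hUstar : memStar S U)
    (S'' S' : C) (a : S'' ⟶ S') (f : S' ⟶ U) (b : U ⟶ S''⟦(1 : ℤ)⟧)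
    (hT : Triangle.mk a f b ∈ distTriang C)
    (hS' : memAdd S S')
    (happrox : ∀ W : C, memAdd S W → ∀ φ : W ⟶ U, ∃ ψ : W ⟶ S', ψ ≫ f = φ)
    (hmin : ∀ φ : S' ⟶ S', φ ≫ f = f → IsIso φ) :
    memAdd S S'' := by
  obtain ⟨X', Y', f', g, h, hX', hY', hT2⟩ := hUstar
  -- f' factors through the approximation f
  obtain ⟨ψ, hψ⟩ := happrox X' hX' f'
  -- f factors through f'
  have hfg : f ≫ g = 0 := hom_eq_zero_of_memAdd hS.1 hS' hY' _
  obtain ⟨φS, hφS⟩ : ∃ φS : S' ⟶ X', f = φS ≫ f' := Triangle.coyoneda_exact₂ _ hT2 f hfg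
  change f = φS ≫ f' at hφS
  -- φS ≫ ψ is an isomorphism by minimality
  have he : (φS ≫ ψ) ≫ f = f := by rw [assoc, hψ, ← hφS]
  have hiso : IsIso (φS ≫ ψ) := hmin _ he
  set e : S' ⟶ S' := φS ≫ ψ with hedef
  let i : S' ⟶ X' := φS
  let r : X' ⟶ S' := ψ ≫ inv e
  have hir : i ≫ r = 𝟙 S' := by
    show φS ≫ ψ ≫ inv e = 𝟙 S'
    rw [← assoc, ← hedef, IsIso.hom_inv_id]
  have hinvf : inv e ≫ f = f := by rw [IsIso.inv_comp_eq, he]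
  have hrf : r ≫ f = f' := by
    show (ψ ≫ inv e) ≫ f = f'
    rw [assoc, hinvf, hψ]
  -- triangles
  have hT1rot : (Triangle.mk a f b).rotate ∈ distTriang C := rot_of_distTriang _ hT
  obtain ⟨α, hα1, hα2⟩ : ∃ α : (shiftFunctor C (1:ℤ)).obj S'' ⟶ Y', b ≫ α = 𝟙 U ≫ g ∧
      (-(shiftFunctor C (1:ℤ)).map a) ≫ (shiftFunctor C (1:ℤ)).map i = α ≫ h := complete_distinguished_triangle_morphism
    (Triangle.mk a f b).rotate (Triangle.mk f' g h) hT1rot hT2 i (𝟙 U)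
    (by change f ≫ 𝟙 U = φS ≫ f'; rw [comp_id, ← hφS])
  obtain ⟨β, hβ1, hβ2⟩ : ∃ β : Y' ⟶ (shiftFunctor C (1:ℤ)).obj S'', g ≫ β = 𝟙 U ≫ b ∧
      h ≫ (shiftFunctor C (1:ℤ)).map r = β ≫ (-(shiftFunctor C (1:ℤ)).map a) := complete_distinguished_triangle_morphism
    (Triangle.mk f' g h) (Triangle.mk a f b).rotate hT2 hT1rot r (𝟙 U)
    (by change f' ≫ 𝟙 U = r ≫ f; rw [comp_id, hrf])
  change b ≫ α = 𝟙 U ≫ g at hα1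
  change (-(shiftFunctor C (1:ℤ)).map a) ≫ (shiftFunctor C (1:ℤ)).map i = α ≫ h at hα2
  change g ≫ β = 𝟙 U ≫ b at hβ1
  change h ≫ (shiftFunctor C (1:ℤ)).map r = β ≫ (-(shiftFunctor C (1:ℤ)).map a) at hβ2
  rw [id_comp] at hα1 hβ1
  -- the composite α ≫ β is an isomorphism
  let φγ : (Triangle.mk a f b).rotate ⟶ (Triangle.mk a f b).rotate :=
    { hom₁ := 𝟙 _
      hom₂ := 𝟙 _
      hom₃ := α ≫ β
      comm₁ := by change f ≫ 𝟙 U = 𝟙 S' ≫ f; rw [id_comp, comp_id]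
      comm₂ := by change b ≫ (α ≫ β) = 𝟙 U ≫ b; rw [id_comp, ← assoc, hα1, hβ1]
      comm₃ := by
        change (-(shiftFunctor C (1:ℤ)).map a) ≫ (shiftFunctor C (1:ℤ)).map (𝟙 S') = (α ≫ β) ≫ (-(shiftFunctor C (1:ℤ)).map a)
        rw [CategoryTheory.Functor.map_id, comp_id]
        calc -(shiftFunctor C (1:ℤ)).map a
            = (-(shiftFunctor C (1:ℤ)).map a) ≫ (shiftFunctor C (1:ℤ)).map i ≫
                (shiftFunctor C (1:ℤ)).map r := by
              rw [← CategoryTheory.Functor.map_comp, hir, CategoryTheory.Functor.map_id, comp_id]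
          _ = (α ≫ h) ≫ (shiftFunctor C (1:ℤ)).map r := by rw [← assoc, hα2]
          _ = α ≫ β ≫ (-(shiftFunctor C (1:ℤ)).map a) := by rw [assoc, hβ2]
          _ = (α ≫ β) ≫ (-(shiftFunctor C (1:ℤ)).map a) := by rw [assoc] }
  have hγ : IsIso φγ.hom₃ :=
    isIso₃_of_isIso₁₂ φγ hT1rot hT1rot (by dsimp [φγ]; infer_instance)
      (by dsimp [φγ]; infer_instance)
  have hγ' : IsIso (α ≫ β) := hγ
  -- S''⟦1⟧ is a retract of Y'
  have hret : α ≫ (β ≫ inv (α ≫ β)) = 𝟙 (S''⟦(1 : ℤ)⟧) := by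
    rw [← assoc, IsIso.hom_inv_id]
  have h1 : memAdd (S⟦(1 : ℤ)⟧) (S''⟦(1 : ℤ)⟧) := memAdd_of_retract _ _ hret hY'
  have h2 := memAdd_shift (-1 : ℤ) h1
  have eS : (S⟦(1 : ℤ)⟧)⟦(-1 : ℤ)⟧ ≅ S :=
    (shiftFunctorCompIsoId C (1 : ℤ) (-1 : ℤ) (by ring)).app S
  have eS'' : S'' ≅ (S''⟦(1 : ℤ)⟧)⟦(-1 : ℤ)⟧ :=
    ((shiftFunctorCompIsoId C (1 : ℤ) (-1 : ℤ) (by ring)).app S'').symm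
  exact memAdd_of_iso eS'' (memAdd_congr_left eS h2)
end

section
/- Let G_T be a G-system at t₀. Suppose G_u, G_v ∈ G_T, J ⊆ G_u ∩ G_v, G_u = T_J(G_t) and G_v = T_J(G_{t'}) where G_{t'} = μ_{g}(G_t) for some g ∈ G_t. If G_u ≠ G_v, then |G_u ∩ G_v| = n − 1, i.e., they are related by a single mutation. In particular, applying T_J to two bases related by one mutation yields bases related by at most one mutation. -/
section
open Finset
variable {n : ℕ}

/-- Core uniqueness-condition argument. -/
lemma keyA (f h : Fin (n+1) → (Fin (n+1) → ℤ)) (J : Set (Fin (n+1) → ℤ))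
    (hfinj : Function.Injective f) (hhinj : Function.Injective h)
    (hJu : J ⊆ Set.range f) (hJv : J ⊆ Set.range h)
    (uniq : ∀ (I I' : Finset (Fin (n+1))) (r r' : Fin (n+1) → ℤ),
      (∀ i ∈ I, 0 < r i) → (∀ j ∈ I', 0 < r' j) →
      (∑ i ∈ I, r i • f i) = (∑ j ∈ I', r' j • h j) →
      ∃ σ : Fin (n+1) → Fin (n+1), Set.BijOn σ ↑I' ↑I ∧
        ∀ j ∈ I', r' j = r (σ j) ∧ h j = f (σ j))
    (r s : Fin (n+1) → ℤ)
    (hw : ∑ i, r i • f i = ∑ j, s j • h j)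
    (hr : ∀ i, f i ∉ J → 0 ≤ r i)
    (hs : ∀ j, h j ∉ J → 0 ≤ s j)
    {i₀ : Fin (n+1)} (hiJ : f i₀ ∉ J) (hri : 0 < r i₀) :
    f i₀ ∈ Set.range h := by
  classical
  set σv : Fin (n+1) → Fin (n+1) := fun i => Function.invFun h (f i) with hσv
  set σu : Fin (n+1) → Fin (n+1) := fun j => Function.invFun f (h j) with hσu
  have hv_eq : ∀ i, f i ∈ J → h (σv i) = f i := fun i hi => Function.invFun_eq (hJv hi)
  have hu_eq : ∀ j, h j ∈ J → f (σu j) = h j := fun j hj => Function.invFun_eq (hJu hj)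
  have hmemv : ∀ i, f i ∈ J → h (σv i) ∈ J := fun i hi => by rw [hv_eq i hi]; exact hi
  have hmemu : ∀ j, h j ∈ J → f (σu j) ∈ J := fun j hj => by rw [hu_eq j hj]; exact hj
  have huv : ∀ i, f i ∈ J → σu (σv i) = i := fun i hi =>
    hfinj (by rw [hu_eq _ (hmemv i hi), hv_eq _ hi])
  have hvu : ∀ j, h j ∈ J → σv (σu j) = j := fun j hj =>
    hhinj (by rw [hv_eq _ (hmemu j hj), hu_eq _ hj])
  set c : Fin (n+1) → ℤ := fun i => r i - (if f i ∈ J then s (σv i) else 0) with hc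
  set e : Fin (n+1) → ℤ := fun j => s j - (if h j ∈ J then r (σu j) else 0) with he
  have hcJ : ∀ i, f i ∈ J → c i = r i - s (σv i) := fun i hi => by rw [hc]; simp [hi]
  have hcnJ : ∀ i, f i ∉ J → c i = r i := fun i hi => by rw [hc]; simp [hi]
  have heJ : ∀ j, h j ∈ J → e j = s j - r (σu j) := fun j hj => by rw [he]; simp [hj]
  have henJ : ∀ j, h j ∉ J → e j = s j := fun j hj => by rw [he]; simp [hj]
  have hneg : ∀ i, f i ∈ J → e (σv i) = -(c i) := by
    intro i hi
    rw [heJ _ (hmemv i hi), huv i hi, hcJ i hi]; ring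
  have hneg' : ∀ j, h j ∈ J → c (σu j) = -(e j) := by
    intro j hj
    rw [hcJ _ (hmemu j hj), hvu j hj, heJ j hj]; ring
  -- identity 1
  have id1 : ∑ i, c i • f i = ∑ j ∈ univ.filter (fun j => h j ∉ J), s j • h j := by
    have e1 : ∀ i : Fin (n+1), c i • f i
        = r i • f i - (if f i ∈ J then s (σv i) • f i else 0) := by
      intro i; rw [hc]; simp only [sub_smul, ite_smul, zero_smul]
    rw [Finset.sum_congr rfl (fun i _ => e1 i), Finset.sum_sub_distrib, hw,
      ← Finset.sum_filter]
    have e2 : ∑ i ∈ univ.filter (fun i => f i ∈ J), s (σv i) • f i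
        = ∑ j ∈ univ.filter (fun j => h j ∈ J), s j • h j := by
      refine Finset.sum_nbij' σv σu ?_ ?_ ?_ ?_ ?_
      · intro a ha; simp only [mem_filter, mem_univ, true_and] at ha ⊢
        exact hmemv a ha
      · intro a ha; simp only [mem_filter, mem_univ, true_and] at ha ⊢
        exact hmemu a ha
      · intro a ha; simp only [mem_filter, mem_univ, true_and] at ha
        exact huv a ha
      · intro a ha; simp only [mem_filter, mem_univ, true_and] at ha
        exact hvu a ha
      · intro a ha; simp only [mem_filter, mem_univ, true_and] at ha
        rw [hv_eq a ha]
    rw [e2, ← Finset.sum_filter_add_sum_filter_not Finset.univ (fun j => h j ∈ J)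
      (fun j => s j • h j), add_sub_cancel_left]
  -- identity 2
  set P := univ.filter (fun i => 0 < c i) with hP
  set Q := univ.filter (fun j => 0 < e j) with hQ
  set Qv := univ.filter (fun j => h j ∈ J ∧ 0 < e j) with hQv
  have hNJ : ∀ i, c i < 0 → f i ∈ J := by
    intro i hci
    by_contra hfi
    exact absurd (hcnJ i hfi ▸ hci) (not_lt.mpr (hr i hfi))
  have id2 : ∑ i ∈ P, c i • f i = ∑ j ∈ Q, e j • h j := by
    have hsplit : ∑ i ∈ P, c i • f i + ∑ i ∈ univ.filter (fun i => ¬ 0 < c i), c i • f i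
        = ∑ i, c i • f i := Finset.sum_filter_add_sum_filter_not _ _ _
    have hnegpart : ∑ i ∈ univ.filter (fun i => ¬ 0 < c i), c i • f i
        = ∑ i ∈ univ.filter (fun i => c i < 0), c i • f i := by
      refine (Finset.sum_subset ?_ ?_).symm
      · intro i hi; simp only [mem_filter, mem_univ, true_and] at hi ⊢
        exact not_lt.mpr (le_of_lt hi)
      · intro i hi hni; simp only [mem_filter, mem_univ, true_and] at hi hni
        have : c i = 0 := le_antisymm (not_lt.mp hi) (not_lt.mp hni)
        rw [this, zero_smul]
    have hres : ∑ i ∈ univ.filter (fun i => c i < 0), c i • f i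
        = ∑ j ∈ Qv, -(e j • h j) := by
      refine Finset.sum_nbij' σv σu ?_ ?_ ?_ ?_ ?_
      · intro a ha; simp only [mem_filter, mem_univ, true_and] at ha
        have haJ := hNJ a ha
        simp only [hQv, mem_filter, mem_univ, true_and]
        exact ⟨hmemv a haJ, by rw [hneg a haJ]; exact neg_pos.mpr ha⟩
      · intro a ha; simp only [hQv, mem_filter, mem_univ, true_and] at ha
        simp only [mem_filter, mem_univ, true_and]
        rw [hneg' a ha.1]
        exact neg_lt_zero.mpr ha.2
      · intro a ha; simp only [mem_filter, mem_univ, true_and] at ha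
        exact huv a (hNJ a ha)
      · intro a ha; simp only [hQv, mem_filter, mem_univ, true_and] at ha
        exact hvu a ha.1
      · intro a ha; simp only [mem_filter, mem_univ, true_and] at ha
        have haJ := hNJ a ha
        rw [hneg a haJ, hv_eq a haJ]
        rw [neg_smul, neg_neg]
    have hQsplit : ∑ j ∈ Q, e j • h j
        = ∑ j ∈ Qv, e j • h j + ∑ j ∈ univ.filter (fun j => h j ∉ J), s j • h j := by
      have h1 : ∑ j ∈ Q, e j • h j = ∑ j, if 0 < e j then e j • h j else 0 := by
        rw [hQ, Finset.sum_filter]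
      rw [h1, ← Finset.sum_filter_add_sum_filter_not Finset.univ (fun j => h j ∈ J)
        (fun j => if 0 < e j then e j • h j else 0)]
      congr 1
      · rw [← Finset.sum_filter, Finset.filter_filter, hQv]
      · rw [← Finset.sum_filter, Finset.filter_filter]
        have hsub : ∑ j ∈ univ.filter (fun j => ¬ h j ∈ J ∧ 0 < e j), e j • h j
            = ∑ j ∈ univ.filter (fun j => h j ∉ J), e j • h j := by
          refine Finset.sum_subset ?_ ?_
          · intro j hj; simp only [mem_filter, mem_univ, true_and] at hj ⊢
            exact hj.1
          · intro j hj hnj; simp only [mem_filter, mem_univ, true_and] at hj hnj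
            have h0 : e j = 0 := by
              have h1 : ¬ 0 < e j := fun hpos => hnj ⟨hj, hpos⟩
              have h2 := hs j hj
              have h3 := henJ j hj
              omega
            rw [h0, zero_smul]
        rw [hsub]
        refine Finset.sum_congr rfl ?_
        intro j hj; simp only [mem_filter, mem_univ, true_and] at hj
        rw [henJ j hj]
    calc ∑ i ∈ P, c i • f i
        = (∑ i, c i • f i) - ∑ i ∈ univ.filter (fun i => ¬ 0 < c i), c i • f i := by
          rw [← hsplit]; abel
      _ = (∑ j ∈ univ.filter (fun j => h j ∉ J), s j • h j) - ∑ j ∈ Qv, -(e j • h j) := by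
          rw [id1, hnegpart, hres]
      _ = ∑ j ∈ Qv, e j • h j + ∑ j ∈ univ.filter (fun j => h j ∉ J), s j • h j := by
          rw [Finset.sum_neg_distrib]; abel
      _ = ∑ j ∈ Q, e j • h j := hQsplit.symm
  have hpos : ∀ i ∈ P, 0 < c i := fun i hi => (Finset.mem_filter.mp hi).2
  have hpos' : ∀ j ∈ Q, 0 < e j := fun j hj => (Finset.mem_filter.mp hj).2
  obtain ⟨σ, hbij, hσ⟩ := uniq P Q c e hpos hpos' id2
  have hiP : i₀ ∈ P := Finset.mem_filter.mpr ⟨Finset.mem_univ _, by rw [hcnJ i₀ hiJ]; exact hri⟩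
  obtain ⟨j, hjQ, hji⟩ := hbij.surjOn (Finset.mem_coe.mpr hiP)
  refine ⟨j, ?_⟩
  rw [(hσ j (Finset.mem_coe.mp hjQ)).2, hji]

end

section
open Finset
variable {N : ℕ} {M : Type*} [AddCommGroup M] [Module ℤ M]

/-- No two coordinate rows of the `N` independent vectors can vanish identically. -/
lemma twoZero (B : Module.Basis (Fin (N+1)) ℤ M) (w : Fin (N+1) → M) (k₀ : Fin (N+1))
    (hw : LinearIndependent ℤ (fun m : {m : Fin (N+1) // m ≠ k₀} => w m.1))
    {i₁ i₂ : Fin (N+1)} (h12 : i₁ ≠ i₂)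
    (h1 : ∀ m, m ≠ k₀ → B.repr (w m) i₁ = 0)
    (h2 : ∀ m, m ≠ k₀ → B.repr (w m) i₂ = 0) : False := by
  classical
  set F : {m : Fin (N+1) // m ≠ k₀} → ({j : Fin (N+1) // j ≠ i₁ ∧ j ≠ i₂} → ℤ) :=
    fun m j => B.repr (w m.1) j.1 with hF
  have hFind : LinearIndependent ℤ F := by
    rw [Fintype.linearIndependent_iff]
    intro a ha
    apply Fintype.linearIndependent_iff.mp hw a
    rw [← LinearEquiv.map_eq_zero_iff B.repr]
    ext j
    rw [map_sum, Finset.sum_apply']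
    simp only [map_smul, Finsupp.smul_apply, smul_eq_mul, Finsupp.coe_zero, Pi.zero_apply]
    by_cases hj1 : j = i₁
    · subst hj1
      refine Finset.sum_eq_zero fun m _ => ?_
      rw [h1 m.1 m.2, mul_zero]
    by_cases hj2 : j = i₂
    · subst hj2
      refine Finset.sum_eq_zero fun m _ => ?_
      rw [h2 m.1 m.2, mul_zero]
    · have := congrFun ha ⟨j, hj1, hj2⟩
      simpa [hF] using this
  have hcard := hFind.fintype_card_le_finrank
  rw [Module.finrank_pi] at hcard
  have c1 : Fintype.card {m : Fin (N+1) // m ≠ k₀} = N := by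
    simp [Fintype.card_subtype_compl]
  have c2 : Fintype.card {j : Fin (N+1) // j ≠ i₁ ∧ j ≠ i₂} ≤ N - 1 := by
    rw [Fintype.card_subtype]
    have he : Finset.univ.filter (fun j : Fin (N+1) => j ≠ i₁ ∧ j ≠ i₂)
        = Finset.univ \ {i₁, i₂} := by
      ext j; simp [not_or]
    rw [he, Finset.card_sdiff_of_subset (by simp)]
    have h2 : ({i₁, i₂} : Finset (Fin (N+1))).card = 2 := Finset.card_pair h12
    simp [h2]
  have hN : 1 ≤ N := by
    rcases Nat.eq_zero_or_pos N with h | h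
    · subst h
      have hi1 := i₁.isLt
      have hi2 := i₂.isLt
      exact absurd (Fin.ext (by omega)) h12
    · exact h
  omega

end

/-- The key step of Theorem 5.2.1: suppose `G_{t'} = μ_g(G_t)` is a mutation of
`G_t`, `J ⊆ G_{t₀}` with `G_u = T_J(G_t)` and `G_v = T_J(G_{t'})`. If
`G_u ≠ G_v` then they have exactly `n - 1` common vectors, i.e. they are
related by a single mutation. (Ambient rank `n + 1`, so `n - 1` becomes `n`.) -/
theorem stmt17 {n : ℕ} {T : Type} {t₀ : T} (S : GSystem (n + 1) T t₀) (t t' : T)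
    (hmut : ∃ k : Fin (n + 1), S.IsMutationAt t t' k)
    (J : Set (Fin (n + 1) → ℤ)) (hJ : J ⊆ Set.range (S.g t₀))
    (u v : T) (hu : S.IsCoB J t u) (hv : S.IsCoB J t' v)
    (hne : Set.range (S.g u) ≠ Set.range (S.g v)) :
    (Set.range (S.g u) ∩ Set.range (S.g v)).ncard = n ∧
    ∃ k : Fin (n + 1),
      Set.range (S.g u) ∩ Set.range (S.g v) = Set.range (S.g u) \ {S.g u k} := by
  classical
  obtain ⟨k₀, hmutk⟩ := hmut
  rw [GSystem.IsMutationAt] at hmutk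
  have hginj : ∀ w : T, Function.Injective (S.g w) := fun w => (S.indep w).injective
  -- bases
  have hBu' : ⊤ ≤ Submodule.span ℤ (Set.range (S.g u)) := by rw [S.span u]
  have hBv' : ⊤ ≤ Submodule.span ℤ (Set.range (S.g v)) := by rw [S.span v]
  set Bu : Module.Basis (Fin (n+1)) ℤ (Fin (n+1) → ℤ) := Module.Basis.mk (S.indep u) hBu' with hBu
  set Bv : Module.Basis (Fin (n+1)) ℤ (Fin (n+1) → ℤ) := Module.Basis.mk (S.indep v) hBv' with hBv
  have hBu_apply : ∀ i, Bu i = S.g u i := fun i => by rw [hBu, Module.Basis.mk_apply]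
  have hBv_apply : ∀ i, Bv i = S.g v i := fun i => by rw [hBv, Module.Basis.mk_apply]
  -- common vectors
  have hcommon : ∀ m, m ≠ k₀ → S.g t m ∈ Set.range (S.g t') := by
    intro m hm
    have hmem : S.g t m ∈ Set.range (S.g t) \ {S.g t k₀} := by
      refine ⟨⟨m, rfl⟩, ?_⟩
      simp only [Set.mem_singleton_iff]
      exact fun h => hm (hginj t h)
    rw [← hmutk] at hmem
    exact hmem.2
  -- key : a u-vector not in G_v has zero coordinate in all common vectors
  have key : ∀ i : Fin (n+1), S.g u i ∉ Set.range (S.g v) →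
      ∀ m, m ≠ k₀ → Bu.repr (S.g t m) i = 0 := by
    intro i hiv m hm
    by_contra hne0
    set r : Fin (n+1) → ℤ := fun j => Bu.repr (S.g t m) j with hrdef
    have hwu : S.g t m = ∑ j, r j • S.g u j := by
      conv_lhs => rw [← Bu.sum_repr (S.g t m)]
      exact Finset.sum_congr rfl fun j _ => by rw [hBu_apply]
    have hru : ∀ j, S.g u j ∉ J → 0 ≤ r j := hu.2 m r hwu
    obtain ⟨m', hm'⟩ := hcommon m hm
    set s : Fin (n+1) → ℤ := fun j => Bv.repr (S.g t m) j with hsdef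
    have hwv : S.g t' m' = ∑ j, s j • S.g v j := by
      rw [hm']
      conv_lhs => rw [← Bv.sum_repr (S.g t m)]
      exact Finset.sum_congr rfl fun j _ => by rw [hBv_apply]
    have hsv : ∀ j, S.g v j ∉ J → 0 ≤ s j := hv.2 m' s hwv
    have heq : ∑ j, r j • S.g u j = ∑ j, s j • S.g v j := by
      rw [← hwu, ← hwv, hm']
    have hiJ : S.g u i ∉ J := fun h => hiv (hv.1 h)
    have hri : 0 < r i := lt_of_le_of_ne (hru i hiJ) (Ne.symm hne0)
    exact hiv (keyA (S.g u) (S.g v) J (hginj u) (hginj v) hu.1 hv.1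
      (S.uniqueness u v) r s heq hru hsv hiJ hri)
  -- at most one bad index
  have hsub : ∀ i₁ i₂ : Fin (n+1), S.g u i₁ ∉ Set.range (S.g v) →
      S.g u i₂ ∉ Set.range (S.g v) → i₁ = i₂ := by
    intro i₁ i₂ h1 h2
    by_contra h12
    exact twoZero Bu (S.g t) k₀
      ((S.indep t).comp _ Subtype.val_injective) h12 (key i₁ h1) (key i₂ h2)
  -- cardinalities
  have hfin : (Set.range (S.g u)).Finite := Set.finite_range _
  have hncu : (Set.range (S.g u)).ncard = n + 1 := by
    rw [← Set.image_univ, Set.ncard_image_of_injective _ (hginj u), Set.ncard_univ]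
    simp
  have hncv : (Set.range (S.g v)).ncard = n + 1 := by
    rw [← Set.image_univ, Set.ncard_image_of_injective _ (hginj v), Set.ncard_univ]
    simp
  by_cases hex : ∃ k : Fin (n+1), S.g u k ∉ Set.range (S.g v)
  · obtain ⟨k, hk⟩ := hex
    have hset : Set.range (S.g u) ∩ Set.range (S.g v) = Set.range (S.g u) \ {S.g u k} := by
      ext x
      constructor
      · rintro ⟨hxu, hxv⟩
        refine ⟨hxu, ?_⟩
        simp only [Set.mem_singleton_iff]
        rintro rfl
        exact hk hxv
      · rintro ⟨⟨i, rfl⟩, hxk⟩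
        refine ⟨⟨i, rfl⟩, ?_⟩
        by_contra hxv
        exact hxk (by rw [hsub i k hxv hk]; exact rfl)
    refine ⟨?_, k, hset⟩
    rw [hset, Set.ncard_diff_singleton_of_mem (Set.mem_range_self k), hncu]
    omega
  · push_neg at hex
    exfalso
    apply hne
    have hsubs : Set.range (S.g u) ⊆ Set.range (S.g v) := by
      rintro x ⟨i, rfl⟩
      exact hex i
    exact Set.eq_of_subset_of_ncard_le hsubs (by rw [hncu, hncv]) (Set.finite_range _)
end
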